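/- arXiv:1407.2566 — 9 statements merged into one kernel-verified Lean document; each statement's English description precedes it below -/
import Mathlib

section
/- If T is a positive linear map on Hermitian operators of a finite-dimensional Hilbert space and W is a T-invariant set of positive semidefinite operators, then for every positive semidefinite X with supp(X) ⊆ supp(W), one has supp(T(X)) ⊆ supp(W). -/
open Matrix
open scoped ComplexOrder

/-- The support `(ker X)ᗮ` of an operator. -/
noncomputable def msupp {n : Type*} [Fintype n] [DecidableEq n]
    (X : Matrix n n ℂ) : Submodule ℂ (EuclideanSpace ℂ n) :=
  (LinearMap.ker (Matrix.toEuclideanLin X))ᗮ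

/-- The support of a set of operators: the span of the supports of its elements. -/
noncomputable def wsupp {n : Type*} [Fintype n] [DecidableEq n]
    (W : Set (Matrix n n ℂ)) : Submodule ℂ (EuclideanSpace ℂ n) :=
  ⨆ η ∈ W, msupp η

section Aux

set_option linter.unusedSectionVars false

variable {n : Type*} [Fintype n] [DecidableEq n]

lemma mem_ker_toEuclideanLin_iff {A : Matrix n n ℂ} {x : EuclideanSpace ℂ n} :
    x ∈ LinearMap.ker (Matrix.toEuclideanLin A) ↔ A *ᵥ (WithLp.equiv 2 _ x) = 0 := by
  rw [LinearMap.mem_ker, Matrix.toEuclideanLin_apply]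
  constructor
  · intro h; simpa using congrArg (WithLp.equiv 2 (n → ℂ)) h
  · intro h; simpa using h

lemma msupp_le_msupp {A B : Matrix n n ℂ}
    (h : ∀ x : n → ℂ, B *ᵥ x = 0 → A *ᵥ x = 0) : msupp A ≤ msupp B := by
  apply Submodule.orthogonal_le
  intro x hx
  exact mem_ker_toEuclideanLin_iff.2 (h _ (mem_ker_toEuclideanLin_iff.1 hx))

lemma mulVec_eq_zero_of_sub_psd {A B : Matrix n n ℂ} (hA : A.PosSemidef)
    (hBA : (B - A).PosSemidef) {x : n → ℂ} (hx : B *ᵥ x = 0) : A *ᵥ x = 0 := by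
  apply (hA.dotProduct_mulVec_zero_iff x).1
  have h1 := hA.dotProduct_mulVec_nonneg x
  have h2 := hBA.dotProduct_mulVec_nonneg x
  rw [Matrix.sub_mulVec, dotProduct_sub, hx, dotProduct_zero, zero_sub, neg_nonneg] at h2
  exact le_antisymm h2 h1

lemma msupp_le_of_sub_psd {A B : Matrix n n ℂ} (hA : A.PosSemidef)
    (hBA : (B - A).PosSemidef) : msupp A ≤ msupp B :=
  msupp_le_msupp fun _ hx => mulVec_eq_zero_of_sub_psd hA hBA hx

lemma orth_msupp {A : Matrix n n ℂ} : (msupp A)ᗮ = LinearMap.ker (Matrix.toEuclideanLin A) :=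
  Submodule.orthogonal_orthogonal _

lemma psd_sum {ι : Type*} (s : Finset ι) (A : ι → Matrix n n ℂ)
    (h : ∀ i ∈ s, (A i).PosSemidef) : (∑ i ∈ s, A i).PosSemidef := by
  classical
  induction s using Finset.induction_on with
  | empty => simpa using Matrix.PosSemidef.zero
  | insert _ _ hnot ih =>
    rename_i a t
    rw [Finset.sum_insert hnot]
    exact ((h a (Finset.mem_insert_self a t)).add
      (ih fun i hi => h i (Finset.mem_insert_of_mem hi)))

lemma msupp_sum_le {ι : Type*} (s : Finset ι) (A : ι → Matrix n n ℂ) :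
    msupp (∑ i ∈ s, A i) ≤ ⨆ i ∈ s, msupp (A i) := by
  rw [msupp, ← Submodule.orthogonal_orthogonal (⨆ i ∈ s, msupp (A i))]
  apply Submodule.orthogonal_le
  intro x hx
  have hmem : ∀ i ∈ s, x ∈ LinearMap.ker (Matrix.toEuclideanLin (A i)) := by
    intro i hi
    rw [← orth_msupp]
    exact (Submodule.orthogonal_le (le_iSup₂ (f := fun i _ => msupp (A i)) i hi)) hx
  have h0 : ∀ i ∈ s, (A i) *ᵥ (WithLp.equiv 2 _ x) = 0 := fun i hi =>
    mem_ker_toEuclideanLin_iff.1 (hmem i hi)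
  rw [mem_ker_toEuclideanLin_iff]
  calc (∑ i ∈ s, A i) *ᵥ (WithLp.equiv 2 _ x)
      = ∑ i ∈ s, (A i) *ᵥ (WithLp.equiv 2 _ x) := by
        funext j
        simp only [Matrix.mulVec, dotProduct, Finset.sum_apply,
          Matrix.sum_apply, Finset.sum_mul]
        rw [Finset.sum_comm]
    _ = 0 := Finset.sum_eq_zero h0

section SqrtAux
open scoped MatrixOrder

noncomputable def Matrix.PosSemidef.sqrt {A : Matrix n n ℂ} (_hA : A.PosSemidef) :
    Matrix n n ℂ := CFC.sqrt A

lemma Matrix.PosSemidef.sqrt_mul_self {A : Matrix n n ℂ} (hA : A.PosSemidef) :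
    hA.sqrt * hA.sqrt = A := CFC.sqrt_mul_sqrt_self A hA.nonneg

lemma Matrix.PosSemidef.posSemidef_sqrt {A : Matrix n n ℂ} (hA : A.PosSemidef) :
    hA.sqrt.PosSemidef := (CFC.sqrt_nonneg A).posSemidef

end SqrtAux

lemma dot_conj (S : Matrix n n ℂ) (x : n → ℂ) :
    star x ⬝ᵥ ((Sᴴ * S) *ᵥ x) = star (S *ᵥ x) ⬝ᵥ (S *ᵥ x) := by
  rw [star_mulVec, ← Matrix.mulVec_mulVec, dotProduct_mulVec]

lemma sqrt_mulVec_zero {X : Matrix n n ℂ} (hX : X.PosSemidef) {x : n → ℂ} :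
    hX.sqrt *ᵥ x = 0 ↔ X *ᵥ x = 0 := by
  constructor
  · intro h
    rw [← hX.sqrt_mul_self, ← Matrix.mulVec_mulVec, h, Matrix.mulVec_zero]
  · intro h
    have h0 : star x ⬝ᵥ (X *ᵥ x) = 0 := by rw [h, dotProduct_zero]
    have hherm : hX.sqrt.conjTranspose = hX.sqrt := hX.posSemidef_sqrt.isHermitian
    rw [← hX.sqrt_mul_self] at h0
    nth_rewrite 1 [← hherm] at h0
    rw [dot_conj] at h0
    exact dotProduct_star_self_eq_zero.1 h0

lemma ker_sqrt {X : Matrix n n ℂ} (hX : X.PosSemidef) :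
    LinearMap.ker (Matrix.toEuclideanLin hX.sqrt) = LinearMap.ker (Matrix.toEuclideanLin X) := by
  ext x
  rw [mem_ker_toEuclideanLin_iff, mem_ker_toEuclideanLin_iff, sqrt_mulVec_zero hX]

lemma exists_factor {E F G : Type*} [AddCommGroup E] [AddCommGroup F] [AddCommGroup G]
    [Module ℂ E] [Module ℂ F] [Module ℂ G]
    (q : E →ₗ[ℂ] F) (p : E →ₗ[ℂ] G) (h : LinearMap.ker q ≤ LinearMap.ker p) :
    ∃ b : F →ₗ[ℂ] G, p = b ∘ₗ q := by
  obtain ⟨m, hm⟩ := Submodule.exists_isCompl (LinearMap.range q)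
  obtain ⟨r, hr⟩ := q.rangeRestrict.exists_rightInverse_of_surjective
    (LinearMap.range_rangeRestrict q)
  set π := (LinearMap.range q).projectionOnto m hm with hπ
  refine ⟨p ∘ₗ r ∘ₗ π, ?_⟩
  ext x
  have hqx : q x ∈ LinearMap.range q := ⟨x, rfl⟩
  have h1 : π (q x) = ⟨q x, hqx⟩ := by
    have := Submodule.linearProjOfIsCompl_apply_left hm (⟨q x, hqx⟩ : LinearMap.range q)
    simpa [hπ] using this
  have h2 : q (r ⟨q x, hqx⟩) = q x := by
    have := congrArg Subtype.val (LinearMap.ext_iff.1 hr ⟨q x, hqx⟩)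
    simpa using this
  have h3 : x - r ⟨q x, hqx⟩ ∈ LinearMap.ker q := by
    rw [LinearMap.mem_ker, map_sub, h2, sub_self]
  have h4 : p (x - r ⟨q x, hqx⟩) = 0 := h (h3)
  rw [map_sub, sub_eq_zero] at h4
  simp only [LinearMap.comp_apply, h1]
  exact h4

lemma dot_eq_norm_sq {M : Matrix n n ℂ} (hM : M.PosSemidef) (x : n → ℂ) :
    star x ⬝ᵥ (M *ᵥ x) =
      ((‖Matrix.toEuclideanLin hM.sqrt ((WithLp.equiv 2 (n → ℂ)).symm x)‖ : ℂ))^2 := by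
  have hherm : hM.sqrt.conjTranspose = hM.sqrt := hM.posSemidef_sqrt.isHermitian
  have h1 : star x ⬝ᵥ (M *ᵥ x) = star (hM.sqrt *ᵥ x) ⬝ᵥ (hM.sqrt *ᵥ x) := by
    conv_lhs => rw [← hM.sqrt_mul_self]
    nth_rewrite 1 [← hherm]
    rw [dot_conj]
  rw [h1]
  have e := inner_self_eq_norm_sq_to_K (𝕜 := ℂ)
    (Matrix.toEuclideanLin hM.sqrt ((WithLp.equiv 2 (n → ℂ)).symm x))
  rw [EuclideanSpace.inner_eq_star_dotProduct, dotProduct_comm] at e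
  exact_mod_cast e

lemma exists_smul_sub_psd {X Y : Matrix n n ℂ} (hX : X.PosSemidef) (hY : Y.PosSemidef)
    (h : msupp X ≤ msupp Y) : ∃ c : ℝ, ((c : ℂ) • Y - X).PosSemidef := by
  have hker : LinearMap.ker (Matrix.toEuclideanLin Y)
      ≤ LinearMap.ker (Matrix.toEuclideanLin X) := by
    have h2 := Submodule.orthogonal_le h
    rwa [msupp, msupp, Submodule.orthogonal_orthogonal, Submodule.orthogonal_orthogonal] at h2
  have hkerPQ : LinearMap.ker (Matrix.toEuclideanLin hY.sqrt)
      ≤ LinearMap.ker (Matrix.toEuclideanLin hX.sqrt) := by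
    rw [ker_sqrt hX, ker_sqrt hY]; exact hker
  obtain ⟨b, hb⟩ := exists_factor (Matrix.toEuclideanLin hY.sqrt)
    (Matrix.toEuclideanLin hX.sqrt) hkerPQ
  set b' := LinearMap.toContinuousLinearMap b with hb'
  refine ⟨‖b'‖^2, .of_dotProduct_mulVec_nonneg ?_ ?_⟩
  · unfold Matrix.IsHermitian
    rw [Matrix.conjTranspose_sub, Matrix.conjTranspose_smul, hX.1, hY.1]
    rw [RCLike.star_def, Complex.conj_ofReal]
  · intro x
    rw [Matrix.sub_mulVec, dotProduct_sub, Matrix.smul_mulVec, dotProduct_smul,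
      dot_eq_norm_sq hX x, dot_eq_norm_sq hY x]
    set x' := (WithLp.equiv 2 (n → ℂ)).symm x
    set u := Matrix.toEuclideanLin hY.sqrt x'
    have hpb : Matrix.toEuclideanLin hX.sqrt x' = b u := by rw [hb, LinearMap.comp_apply]
    rw [hpb]
    have hle : ‖b u‖ ≤ ‖b'‖ * ‖u‖ := b'.le_opNorm u
    have hreal : ((‖b'‖^2 : ℝ) : ℂ) • ((‖u‖ : ℂ))^2 - ((‖b u‖ : ℂ))^2
        = ((‖b'‖^2 * ‖u‖^2 - ‖b u‖^2 : ℝ) : ℂ) := by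
      rw [smul_eq_mul]; push_cast; ring
    rw [hreal, Complex.zero_le_real]
    nlinarith [norm_nonneg (b u), norm_nonneg u, norm_nonneg b']

end Aux

/-- If `T` is a positive linear map and `W` a `T`-invariant set of PSD operators, then
any PSD `X` with `supp X ⊆ supp W` satisfies `supp (T X) ⊆ supp W`. -/
theorem stmt_1 {d : ℕ}
    (T : Matrix (Fin d) (Fin d) ℂ →ₗ[ℂ] Matrix (Fin d) (Fin d) ℂ)
    (hpos : ∀ X : Matrix (Fin d) (Fin d) ℂ, X.PosSemidef → (T X).PosSemidef)
    (W : Set (Matrix (Fin d) (Fin d) ℂ))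
    (hWpsd : ∀ Y ∈ W, Y.PosSemidef)
    (hWinv : ∀ Y ∈ W, T Y ∈ W)
    (X : Matrix (Fin d) (Fin d) ℂ) (hX : X.PosSemidef)
    (hsupp : msupp X ≤ wsupp W) :
    msupp (T X) ≤ wsupp W := by
  classical
  have hfg : (wsupp W).FG := IsNoetherian.noetherian _
  have hcompact := (Submodule.fg_iff_compact _).1 hfg
  have hle : wsupp W ≤ ⨆ η : W, msupp (η : Matrix (Fin d) (Fin d) ℂ) := by
    rw [wsupp, iSup_subtype]
  obtain ⟨s, hs⟩ := CompleteLattice.IsCompactElement.exists_finset_of_le_iSup _ hcompact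
    (fun η : W => msupp (η : Matrix (Fin d) (Fin d) ℂ)) hle
  set Y := ∑ η ∈ s, (η : Matrix (Fin d) (Fin d) ℂ) with hYdef
  have hYpsd : Y.PosSemidef := psd_sum _ _ (fun η _ => hWpsd η η.2)
  have hηY : ∀ η ∈ s, msupp (η : Matrix (Fin d) (Fin d) ℂ) ≤ msupp Y := by
    intro η hη
    apply msupp_le_of_sub_psd (hWpsd η η.2)
    have hsub : Y - (η : Matrix (Fin d) (Fin d) ℂ)
        = ∑ i ∈ s.erase η, (i : Matrix (Fin d) (Fin d) ℂ) := by
      rw [hYdef, ← Finset.add_sum_erase s _ hη]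
      abel
    rw [hsub]
    exact psd_sum _ _ (fun i _ => hWpsd i i.2)
  have hWY : wsupp W ≤ msupp Y := hs.trans (iSup₂_le hηY)
  have hXY : msupp X ≤ msupp Y := hsupp.trans hWY
  obtain ⟨c, hc⟩ := exists_smul_sub_psd hX hYpsd hXY
  have h1 : msupp (T X) ≤ msupp ((c : ℂ) • T Y) := by
    apply msupp_le_of_sub_psd (hpos X hX)
    have heq : (c : ℂ) • T Y - T X = T ((c : ℂ) • Y - X) := by rw [map_sub, _root_.map_smul]
    rw [heq]
    exact hpos _ hc
  have h2 : msupp ((c : ℂ) • T Y) ≤ msupp (T Y) :=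
    msupp_le_msupp (fun x hx => by rw [Matrix.smul_mulVec, hx, smul_zero])
  have h3 : msupp (T Y) ≤ ⨆ η ∈ s, msupp (T (η : Matrix (Fin d) (Fin d) ℂ)) := by
    have heq : T Y = ∑ η ∈ s, T (η : Matrix (Fin d) (Fin d) ℂ) := map_sum T _ s
    rw [heq]
    exact msupp_sum_le _ _
  have h4 : ∀ η ∈ s, msupp (T (η : Matrix (Fin d) (Fin d) ℂ)) ≤ wsupp W := fun η _ =>
    le_iSup₂ (f := fun η (_ : η ∈ W) => msupp η) (T η) (hWinv η η.2)
  exact h1.trans (h2.trans (h3.trans (iSup₂_le h4)))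
end

section
/- Let T(ρ) = Σ_k M_k ρ M_k† be a completely positive map on a finite-dimensional Hilbert space H = H_S ⊕ H_R. Then H_S is invariant for T (i.e., every PSD operator with support in H_S is mapped to one with support in H_S) if and only if, in the block decomposition induced by H_S ⊕ H_R, every Kraus operator M_k has zero lower-left block, i.e., M_k = [[M_{k,S}, M_{k,P}],[0, M_{k,R}]]. -/
open Matrix
open scoped ComplexOrder

/-- The subspace `H_S` of `H = H_S ⊕ H_R`: the range of the orthogonal projection
`Π_S = [[1,0],[0,0]]`. -/
noncomputable def HSsub (a b : ℕ) : Submodule ℂ (EuclideanSpace ℂ (Fin a ⊕ Fin b)) :=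
  LinearMap.range (Matrix.toEuclideanLin
    (Matrix.fromBlocks 1 0 0 0 : Matrix (Fin a ⊕ Fin b) (Fin a ⊕ Fin b) ℂ))

lemma mem_HSsub {a b : ℕ} (v : EuclideanSpace ℂ (Fin a ⊕ Fin b)) :
    v ∈ HSsub a b ↔ ∀ j, v (Sum.inr j) = 0 := by
  constructor
  · rintro ⟨w, rfl⟩ j
    show ((Matrix.fromBlocks 1 0 0 0 : Matrix (Fin a ⊕ Fin b) (Fin a ⊕ Fin b) ℂ)
      *ᵥ (WithLp.equiv 2 _ w)) (Sum.inr j) = 0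
    simp [Matrix.mulVec, dotProduct, Fintype.sum_sum_type]
  · intro hv
    refine ⟨v, ?_⟩
    show (WithLp.equiv 2 _).symm ((Matrix.fromBlocks 1 0 0 0 : Matrix (Fin a ⊕ Fin b) (Fin a ⊕ Fin b) ℂ)
      *ᵥ (WithLp.equiv 2 _ v)) = v
    rw [Equiv.symm_apply_eq]
    funext x
    cases x with
    | inl i => simp [Matrix.mulVec, dotProduct, Fintype.sum_sum_type, Matrix.one_apply]
    | inr j => simp [Matrix.mulVec, dotProduct, Fintype.sum_sum_type, hv j]

lemma msupp_le_HSsub_iff {a b : ℕ} (X : Matrix (Fin a ⊕ Fin b) (Fin a ⊕ Fin b) ℂ) :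
    msupp X ≤ HSsub a b ↔ ∀ x j, X x (Sum.inr j) = 0 := by
  constructor
  · intro h x j
    have he : EuclideanSpace.single (Sum.inr j) (1:ℂ) ∈ (HSsub a b)ᗮ := by
      intro u hu
      rw [mem_HSsub] at hu
      rw [EuclideanSpace.inner_single_right]
      simp [hu]
    have h2 : (HSsub a b)ᗮ ≤ LinearMap.ker (Matrix.toEuclideanLin X) := by
      have h1 := Submodule.orthogonal_le h
      rwa [msupp, Submodule.orthogonal_orthogonal] at h1
    have h3 := LinearMap.mem_ker.mp (h2 he)
    have h4 : (Matrix.toEuclideanLin X (EuclideanSpace.single (Sum.inr j) 1)) x = 0 := by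
      rw [h3]; rfl
    simpa [Matrix.toEuclideanLin_apply, Matrix.mulVec, dotProduct,
      EuclideanSpace.single_apply] using h4
  · intro h v hv
    rw [mem_HSsub]
    intro j
    have hk : EuclideanSpace.single (Sum.inr j) (1:ℂ) ∈ LinearMap.ker (Matrix.toEuclideanLin X) := by
      rw [LinearMap.mem_ker]
      ext x
      show (X *ᵥ (WithLp.equiv 2 _ (EuclideanSpace.single (Sum.inr j) (1:ℂ)))) x = 0
      simp [Matrix.mulVec, dotProduct, EuclideanSpace.single_apply, h]
    have := (Submodule.mem_orthogonal _ _).mp hv _ hk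
    rw [EuclideanSpace.inner_single_left] at this
    simpa using this

lemma entry_aux {a b : ℕ} (N : Matrix (Fin a ⊕ Fin b) (Fin a ⊕ Fin b) ℂ)
    (x y : Fin a ⊕ Fin b) :
    (N * (Matrix.fromBlocks 1 0 0 0 : Matrix (Fin a ⊕ Fin b) (Fin a ⊕ Fin b) ℂ) * Nᴴ) x y
      = ∑ i, N x (Sum.inl i) * star (N y (Sum.inl i)) := by
  simp [Matrix.mul_apply, Fintype.sum_sum_type, Matrix.one_apply, Finset.sum_mul,
    Matrix.conjTranspose_apply, Finset.sum_ite_eq, mul_ite, ite_mul]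

/-- `H_S` is invariant for the CP map `T(ρ) = Σ_k M_k ρ M_k†` iff every Kraus operator
has vanishing lower-left block. -/
theorem stmt_2 {a b K : ℕ}
    (M : Fin K → Matrix (Fin a ⊕ Fin b) (Fin a ⊕ Fin b) ℂ) :
    (∀ ρ : Matrix (Fin a ⊕ Fin b) (Fin a ⊕ Fin b) ℂ, ρ.PosSemidef →
        msupp ρ ≤ HSsub a b → msupp (∑ k, M k * ρ * (M k)ᴴ) ≤ HSsub a b) ↔
      ∀ k, (M k).toBlocks₂₁ = 0 := by
  constructor
  · intro h k
    set P : Matrix (Fin a ⊕ Fin b) (Fin a ⊕ Fin b) ℂ := Matrix.fromBlocks 1 0 0 0 with hPdef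
    have hP : P.PosSemidef := by
      have : P = Pᴴ * P := by
        simp [hPdef, Matrix.fromBlocks_conjTranspose, Matrix.fromBlocks_multiply]
      rw [this]
      exact Matrix.posSemidef_conjTranspose_mul_self _
    have hsupp : msupp P ≤ HSsub a b := by
      rw [msupp_le_HSsub_iff]
      intro x j
      cases x <;> simp [hPdef]
    have h0 := (msupp_le_HSsub_iff _).mp (h P hP hsupp)
    ext j i
    have hz : ∑ k, (M k * P * (M k)ᴴ) (Sum.inr j) (Sum.inr j) = 0 := by
      rw [← Matrix.sum_apply]
      exact h0 (Sum.inr j) j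
    simp only [hPdef, entry_aux] at hz
    have h1 := (Finset.sum_eq_zero_iff_of_nonneg
      (fun k _ => Finset.sum_nonneg fun i _ => mul_star_self_nonneg _)).mp hz k
      (Finset.mem_univ k)
    have h2 := (Finset.sum_eq_zero_iff_of_nonneg
      (fun i _ => mul_star_self_nonneg _)).mp h1 i (Finset.mem_univ i)
    have h3 : M k (Sum.inr j) (Sum.inl i) = 0 := by
      rcases mul_eq_zero.mp h2 with h | h
      · exact h
      · simpa using h
    simpa [Matrix.toBlocks₂₁] using h3
  · intro h ρ hρ hsp
    rw [msupp_le_HSsub_iff] at hsp ⊢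
    intro x j
    rw [Matrix.sum_apply]
    apply Finset.sum_eq_zero
    intro k _
    rw [Matrix.mul_apply]
    apply Finset.sum_eq_zero
    intro l _
    cases l with
    | inl i =>
      have hM : M k (Sum.inr j) (Sum.inl i) = 0 := by
        have h4 : (M k).toBlocks₂₁ j i = 0 := by rw [h k]; rfl
        simpa [Matrix.toBlocks₂₁] using h4
      simp [Matrix.conjTranspose_apply, hM]
    | inr j' =>
      have hzero : (M k * ρ) x (Sum.inr j') = 0 := by
        rw [Matrix.mul_apply]
        exact Finset.sum_eq_zero fun l' _ => by rw [hsp l' j', mul_zero]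
      rw [hzero, zero_mul]
end

section
/- Let T be a CPTP map on a finite-dimensional Hilbert space and H_S a subspace with projection Π_S. H_S is invariant for T if and only if the sequence (T*)^n(Π_S) is monotonically nondecreasing in the Loewner order, i.e., (T*)^{n+1}(Π_S) ≥ (T*)^n(Π_S) for all n ≥ 0. -/
open Matrix
open scoped ComplexOrder

section Aux

open scoped InnerProductSpace

variable {d K : ℕ}

private lemma auxSumPsd (f : Fin K → Matrix (Fin d) (Fin d) ℂ)
    (hf : ∀ k, (f k).PosSemidef) (s : Finset (Fin K)) :
    (∑ k ∈ s, f k).PosSemidef :=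
  Finset.sum_induction f _ (fun _ _ ha hb => ha.add hb) Matrix.PosSemidef.zero
    (fun k _ => hf k)

private lemma auxPsdNegZero {A : Matrix (Fin d) (Fin d) ℂ} (hA : A.PosSemidef)
    (hA' : (-A).PosSemidef) : A = 0 := by
  have hz : ∀ x : Fin d → ℂ, A *ᵥ x = 0 := by
    intro x
    refine (hA.dotProduct_mulVec_zero_iff x).1 (le_antisymm ?_ (hA.dotProduct_mulVec_nonneg x))
    have h := hA'.dotProduct_mulVec_nonneg x
    rw [neg_mulVec, dotProduct_neg] at h
    exact neg_nonneg.mp h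
  ext i j
  have := congr_fun (hz (Pi.single j 1)) i
  rw [mulVec_single] at this
  simpa using this

private lemma auxSumEqZero {f : Fin K → Matrix (Fin d) (Fin d) ℂ}
    (hf : ∀ k, (f k).PosSemidef) (h : ∑ k, f k = 0) (k : Fin K) : f k = 0 := by
  refine auxPsdNegZero (hf k) ?_
  have h2 : f k + ∑ j ∈ Finset.univ.erase k, f j = 0 := by
    rw [Finset.add_sum_erase _ f (Finset.mem_univ k), h]
  have : -f k = ∑ j ∈ Finset.univ.erase k, f j := by
    rw [neg_eq_iff_add_eq_zero, add_comm] at *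
    exact h2
  rw [this]
  exact auxSumPsd f hf _

private lemma auxToEuclideanLinMul (A B : Matrix (Fin d) (Fin d) ℂ)
    (x : EuclideanSpace ℂ (Fin d)) :
    Matrix.toEuclideanLin (A * B) x = Matrix.toEuclideanLin A (Matrix.toEuclideanLin B x) := by
  simp [Matrix.toEuclideanLin_apply, mulVec_mulVec]

private lemma auxSuppLeIff {P ρ : Matrix (Fin d) (Fin d) ℂ}
    (hProj : P * P = P) (hHerm : Pᴴ = P) (hρ : ρ.PosSemidef) :
    msupp ρ ≤ LinearMap.range (Matrix.toEuclideanLin P) ↔ P * ρ = ρ := by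
  have hPsym : (Matrix.toEuclideanLin P).IsSymmetric :=
    (Matrix.isHermitian_iff_isSymmetric).1 hHerm
  have hρsym : (Matrix.toEuclideanLin ρ).IsSymmetric :=
    (Matrix.isHermitian_iff_isSymmetric).1 hρ.1
  set p := Matrix.toEuclideanLin P with hp
  set r := Matrix.toEuclideanLin ρ with hr
  have hpp : ∀ x, p (p x) = p x := by
    intro x
    rw [hp, ← auxToEuclideanLinMul, hProj]
  constructor
  · intro hle
    have key : ∀ x, p (r x) = r x := by
      intro x
      have hmem : r x ∈ msupp ρ := by
        rw [msupp, Submodule.mem_orthogonal]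
        intro k hk
        have hk0 : r k = 0 := hk
        calc ⟪k, r x⟫_ℂ = ⟪r k, x⟫_ℂ := (hρsym k x).symm
          _ = 0 := by rw [hk0, inner_zero_left]
      obtain ⟨z, hz⟩ := hle hmem
      rw [← hz, hpp]
    have heq : Matrix.toEuclideanLin (P * ρ) = Matrix.toEuclideanLin ρ := by
      refine LinearMap.ext fun x => ?_
      rw [auxToEuclideanLinMul]
      exact key x
    exact Matrix.toEuclideanLin.injective heq
  · intro hPρ
    have hρP : ρ * P = ρ := by
      have h1 : (P * ρ)ᴴ = ρᴴ * Pᴴ := conjTranspose_mul P ρ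
      rw [hPρ, hρ.1, hHerm] at h1
      exact h1.symm
    have hsub : (LinearMap.range p)ᗮ ≤ LinearMap.ker r := by
      intro y hy
      have hpy : p y = 0 := by
        have h1 : ⟪p (p y), y⟫_ℂ = 0 := hy _ ⟨p y, rfl⟩
        rw [hPsym (p y) y] at h1
        exact inner_self_eq_zero.mp h1
      have : r y = 0 := by
        have h2 : r y = Matrix.toEuclideanLin (ρ * P) y := by rw [hρP]
        rw [h2, auxToEuclideanLinMul, ← hp, hpy, map_zero]
      exact this
    calc msupp ρ = (LinearMap.ker r)ᗮ := rfl
      _ ≤ ((LinearMap.range p)ᗮ)ᗮ := Submodule.orthogonal_le hsub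
      _ = LinearMap.range p := Submodule.orthogonal_orthogonal _

end Aux

/-- For a CPTP map `T` with Kraus operators `M_k` and a subspace `H_S` given by an
orthogonal projection `P`, `H_S` is invariant for `T` iff the sequence `(T*)^n(P)`
is monotonically nondecreasing in the Loewner order. -/
theorem stmt_6 {d K : ℕ} (M : Fin K → Matrix (Fin d) (Fin d) ℂ)
    (hTP : ∑ k, (M k)ᴴ * M k = 1)
    (P : Matrix (Fin d) (Fin d) ℂ) (hProj : P * P = P) (hHerm : Pᴴ = P)
    (Tdual : Matrix (Fin d) (Fin d) ℂ → Matrix (Fin d) (Fin d) ℂ)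
    (hTdual : Tdual = fun A => ∑ k, (M k)ᴴ * A * M k) :
    (∀ ρ : Matrix (Fin d) (Fin d) ℂ, ρ.PosSemidef →
        msupp ρ ≤ LinearMap.range (Matrix.toEuclideanLin P) →
        msupp (∑ k, M k * ρ * (M k)ᴴ) ≤ LinearMap.range (Matrix.toEuclideanLin P)) ↔
      ∀ n : ℕ, (Tdual^[n + 1] P - Tdual^[n] P).PosSemidef := by
  have hTd : ∀ A, Tdual A = ∑ k, (M k)ᴴ * A * M k := fun A => by rw [hTdual]
  set Q : Matrix (Fin d) (Fin d) ℂ := 1 - P with hQ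
  have hQH : Qᴴ = Q := by rw [hQ, conjTranspose_sub, conjTranspose_one, hHerm]
  have hPQ : P * Q = 0 := by rw [hQ, mul_sub, mul_one, hProj, sub_self]
  have hQQ : Q * Q = Q := by
    rw [hQ, sub_mul, one_mul, mul_sub, mul_one, hProj]
    abel
  have hPQ1 : P + Q = 1 := by rw [hQ]; abel
  have hPpsd : P.PosSemidef := by
    have h := Matrix.posSemidef_conjTranspose_mul_self P
    rwa [hHerm, hProj] at h
  have hQpsd : Q.PosSemidef := by
    have h := Matrix.posSemidef_conjTranspose_mul_self Q
    rwa [hQH, hQQ] at h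
  have hTQ : (∑ k, (M k)ᴴ * Q * M k) = 1 - ∑ k, (M k)ᴴ * P * M k := by
    have h1 : ∀ k : Fin K, (M k)ᴴ * Q * M k = (M k)ᴴ * M k - (M k)ᴴ * P * M k := by
      intro k
      rw [hQ, mul_sub, mul_one, sub_mul]
    rw [Finset.sum_congr rfl (fun k _ => h1 k), Finset.sum_sub_distrib, hTP]
  have hsub1 : (∑ j, (M j)ᴴ * P * M j) - P = Q - ∑ j, (M j)ᴴ * Q * M j := by
    rw [hTQ, hQ]
    abel
  clear_value Q
  -- `Inv` implies the support condition
  have key1 : (∀ k, Q * M k * P = 0) →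
      ∀ ρ : Matrix (Fin d) (Fin d) ℂ, ρ.PosSemidef →
        msupp ρ ≤ LinearMap.range (Matrix.toEuclideanLin P) →
        msupp (∑ k, M k * ρ * (M k)ᴴ) ≤ LinearMap.range (Matrix.toEuclideanLin P) := by
    intro hk ρ hρ hsupp
    have hPρ : P * ρ = ρ := (auxSuppLeIff hProj hHerm hρ).1 hsupp
    have hMP : ∀ j, M j * P = P * (M j * P) := by
      intro j
      have h1 : (P + Q) * (M j * P) = M j * P := by rw [hPQ1, one_mul]
      rw [add_mul] at h1
      have h2 : Q * (M j * P) = 0 := by rw [← mul_assoc]; exact hk j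
      rw [h2, add_zero] at h1
      exact h1.symm
    have hMρ : ∀ j, M j * ρ = P * (M j * ρ) := by
      intro j
      calc M j * ρ = M j * P * ρ := by rw [mul_assoc, hPρ]
        _ = P * (M j * P) * ρ := by rw [← hMP j]
        _ = P * (M j * ρ) := by rw [mul_assoc, mul_assoc, hPρ]
    have hTρpsd : (∑ j, M j * ρ * (M j)ᴴ).PosSemidef :=
      auxSumPsd _ (fun j => hρ.mul_mul_conjTranspose_same (M j)) _
    refine (auxSuppLeIff hProj hHerm hTρpsd).2 ?_
    rw [Finset.mul_sum]
    refine Finset.sum_congr rfl fun j _ => ?_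
    calc P * (M j * ρ * (M j)ᴴ) = P * (M j * ρ) * (M j)ᴴ := by rw [← mul_assoc]
      _ = M j * ρ * (M j)ᴴ := by rw [← hMρ j]
  -- the support condition implies `Inv`
  have key2 : (∀ ρ : Matrix (Fin d) (Fin d) ℂ, ρ.PosSemidef →
      msupp ρ ≤ LinearMap.range (Matrix.toEuclideanLin P) →
      msupp (∑ k, M k * ρ * (M k)ᴴ) ≤ LinearMap.range (Matrix.toEuclideanLin P)) →
      ∀ k, Q * M k * P = 0 := by
    intro hinv k
    have hIP : msupp P ≤ LinearMap.range (Matrix.toEuclideanLin P) :=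
      (auxSuppLeIff hProj hHerm hPpsd).2 hProj
    have h1 := hinv P hPpsd hIP
    have hTPpsd : (∑ j, M j * P * (M j)ᴴ).PosSemidef :=
      auxSumPsd _ (fun j => hPpsd.mul_mul_conjTranspose_same (M j)) _
    have h2 : P * (∑ j, M j * P * (M j)ᴴ) = ∑ j, M j * P * (M j)ᴴ :=
      (auxSuppLeIff hProj hHerm hTPpsd).1 h1
    have hQX : Q * (∑ j, M j * P * (M j)ᴴ) = 0 := by
      rw [hQ, sub_mul, one_mul, h2, sub_self]
    have hterm : ∀ j : Fin K, (Q * M j * P) * (Q * M j * P)ᴴ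
        = Q * (M j * P * (M j)ᴴ) * Q := by
      intro j
      simp only [conjTranspose_mul, hQH, hHerm, mul_assoc]
      rw [← mul_assoc P P, hProj]
    have hsum : ∑ j, (Q * M j * P) * (Q * M j * P)ᴴ = 0 := by
      rw [Finset.sum_congr rfl (fun j _ => hterm j), ← Finset.sum_mul, ← Finset.mul_sum,
        hQX, zero_mul]
    exact self_mul_conjTranspose_eq_zero.mp
      (auxSumEqZero (fun j => Matrix.posSemidef_self_mul_conjTranspose _) hsum k)
  -- `Inv` implies monotonicity
  have key3 : (∀ k, Q * M k * P = 0) →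
      ∀ n : ℕ, (Tdual^[n + 1] P - Tdual^[n] P).PosSemidef := by
    intro hk
    have hQM : ∀ j, Q * (M j * Q) = Q * M j := by
      intro j
      have h1 : Q * M j * (P + Q) = Q * M j := by rw [hPQ1, mul_one]
      rw [mul_add, hk j, zero_add] at h1
      rw [← mul_assoc]
      exact h1
    have hMQ : ∀ j, (M j)ᴴ * Q = Q * ((M j)ᴴ * Q) := by
      intro j
      have h := congrArg conjTranspose (hQM j)
      simp only [conjTranspose_mul, hQH, mul_assoc] at h
      exact h.symm
    have hDterm : ∀ j, (M j)ᴴ * Q * M j = Q * ((M j)ᴴ * Q * M j) * Q := by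
      intro j
      have h1 := congrArg (fun X => X * M j) (hMQ j)
      have h2 : (M j)ᴴ * Q * M j = Q * ((M j)ᴴ * (Q * M j)) := by
        simpa only [mul_assoc] using h1
      calc (M j)ᴴ * Q * M j = Q * ((M j)ᴴ * (Q * M j)) := h2
        _ = Q * ((M j)ᴴ * (Q * (M j * Q))) := by rw [hQM j]
        _ = Q * ((M j)ᴴ * Q * M j) * Q := by simp only [mul_assoc]
    have hs : ∑ j, (M j)ᴴ * Q * M j = Q * (∑ j, (M j)ᴴ * Q * M j) * Q := by
      rw [Finset.mul_sum, Finset.sum_mul]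
      exact Finset.sum_congr rfl fun j _ => hDterm j
    have hD' : (∑ j, (M j)ᴴ * P * M j) - P = Q * (∑ j, (M j)ᴴ * P * M j) * Q := by
      calc (∑ j, (M j)ᴴ * P * M j) - P
          = Q - ∑ j, (M j)ᴴ * Q * M j := hsub1
        _ = Q - Q * (∑ j, (M j)ᴴ * Q * M j) * Q := by conv_lhs => rw [hs]
        _ = Q * (∑ j, (M j)ᴴ * P * M j) * Q := by
            have h1 : (∑ j, (M j)ᴴ * P * M j) = 1 - ∑ j, (M j)ᴴ * Q * M j := by
              rw [hTQ, sub_sub_cancel]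
            rw [h1, mul_sub, mul_one, sub_mul, hQQ]
    have hTPdpsd : (∑ j, (M j)ᴴ * P * M j).PosSemidef :=
      auxSumPsd _ (fun j => hPpsd.conjTranspose_mul_mul_same (M j)) _
    have hDpsd : ((∑ j, (M j)ᴴ * P * M j) - P).PosSemidef := by
      rw [hD']
      have h := hTPdpsd.conjTranspose_mul_mul_same Q
      rwa [hQH] at h
    have hlin : ∀ X Y, Tdual X - Tdual Y = ∑ j, (M j)ᴴ * (X - Y) * M j := by
      intro X Y
      rw [hTd, hTd, ← Finset.sum_sub_distrib]
      exact Finset.sum_congr rfl fun j _ => by rw [mul_sub, sub_mul]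
    intro n
    induction n with
    | zero => simpa [hTd] using hDpsd
    | succ n ih =>
      have e1 : Tdual^[n + 1 + 1] P = Tdual (Tdual^[n + 1] P) :=
        Function.iterate_succ_apply' Tdual (n + 1) P
      have e2 : Tdual^[n + 1] P = Tdual (Tdual^[n] P) :=
        Function.iterate_succ_apply' Tdual n P
      have hstep : Tdual^[n + 1 + 1] P - Tdual^[n + 1] P
          = ∑ j, (M j)ᴴ * (Tdual^[n + 1] P - Tdual^[n] P) * M j := by
        rw [e1]
        nth_rewrite 2 [e2]
        exact hlin _ _
      rw [hstep]
      exact auxSumPsd _ (fun j => ih.conjTranspose_mul_mul_same (M j)) _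
  -- monotonicity implies `Inv`
  have key4 : (∀ n : ℕ, (Tdual^[n + 1] P - Tdual^[n] P).PosSemidef) →
      ∀ k, Q * M k * P = 0 := by
    intro hmono k
    have hD : ((∑ j, (M j)ᴴ * P * M j) - P).PosSemidef := by
      have h0 := hmono 0
      simpa [hTd] using h0
    have hPDP : (P * ((∑ j, (M j)ᴴ * P * M j) - P) * P).PosSemidef := by
      have h := hD.conjTranspose_mul_mul_same P
      rwa [hHerm] at h
    have eterm : ∀ j, (Q * (M j * P))ᴴ * (Q * (M j * P)) = P * ((M j)ᴴ * Q * M j) * P := by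
      intro j
      simp only [conjTranspose_mul, hQH, hHerm, mul_assoc]
      rw [← mul_assoc Q Q, hQQ]
    have hPDPeq : P * ((∑ j, (M j)ᴴ * P * M j) - P) * P
        = -(∑ j, (Q * (M j * P))ᴴ * (Q * (M j * P))) := by
      rw [hsub1, mul_sub, sub_mul, hPQ, zero_mul, zero_sub, neg_inj,
        Finset.mul_sum, Finset.sum_mul]
      exact Finset.sum_congr rfl fun j _ => (eterm j).symm
    rw [hPDPeq] at hPDP
    have hSpsd : (∑ j, (Q * (M j * P))ᴴ * (Q * (M j * P))).PosSemidef :=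
      auxSumPsd _ (fun j => Matrix.posSemidef_conjTranspose_mul_self _) _
    have hSzero : ∑ j, (Q * (M j * P))ᴴ * (Q * (M j * P)) = 0 :=
      auxPsdNegZero hSpsd hPDP
    have hkz : Q * (M k * P) = 0 :=
      conjTranspose_mul_self_eq_zero.mp
        (auxSumEqZero (fun j => Matrix.posSemidef_conjTranspose_mul_self _) hSzero k)
    rw [mul_assoc]
    exact hkz
  exact ⟨fun hinv => key3 (key2 hinv), fun hmono => key1 (key4 hmono)⟩
end

section
/- If H_S is an invariant subspace for a CPTP map T on a finite-dimensional Hilbert space, then for every n ≥ 0 the support of (T*)^n(Π_S) is contained in the support of (T*)^{n+1}(Π_S). -/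
open Matrix
open scoped ComplexOrder

/-- A finite sum of matrices applied to a vector. -/
lemma msum_mulVec {d K : ℕ} (X : Fin K → Matrix (Fin d) (Fin d) ℂ)
    (v : Fin d → ℂ) : (∑ k, X k) *ᵥ v = ∑ k, X k *ᵥ v := by
  ext i
  simp only [Matrix.mulVec, dotProduct, Finset.sum_apply, Matrix.sum_apply,
    Finset.sum_mul]
  exact Finset.sum_comm

/-- Dot product distributes over finite sums. -/
lemma dp_sum {d K : ℕ} (v : Fin d → ℂ) (w : Fin K → Fin d → ℂ) :
    v ⬝ᵥ (∑ k, w k) = ∑ k, v ⬝ᵥ w k := by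
  simp only [dotProduct, Finset.sum_apply, Finset.mul_sum]
  exact Finset.sum_comm

/-- A finite sum of PSD matrices is PSD. -/
lemma psd_sum_s7 {d K : ℕ} (X : Fin K → Matrix (Fin d) (Fin d) ℂ)
    (h : ∀ k, (X k).PosSemidef) : (∑ k, X k).PosSemidef :=
  Finset.sum_induction X Matrix.PosSemidef
    (fun _ _ ha hb => ha.add hb) Matrix.PosSemidef.zero (fun k _ => h k)

/-- Kernel inclusion (at `mulVec` level) implies support inclusion. -/
lemma msupp_mono {d : ℕ} {X Y : Matrix (Fin d) (Fin d) ℂ}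
    (h : ∀ v : Fin d → ℂ, Y *ᵥ v = 0 → X *ᵥ v = 0) : msupp X ≤ msupp Y := by
  apply Submodule.orthogonal_le
  intro v hv
  rw [LinearMap.mem_ker] at hv ⊢
  exact congrArg (WithLp.toLp 2) (h _ (congrArg WithLp.ofLp hv))

/-- If `H_S` (given by the orthogonal projection `P`) is invariant for a CPTP map `T`,
then the supports of `(T*)^n(P)` form a nondecreasing sequence of subspaces. -/
theorem stmt_7 {d K : ℕ} (M : Fin K → Matrix (Fin d) (Fin d) ℂ)
    (hTP : ∑ k, (M k)ᴴ * M k = 1)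
    (P : Matrix (Fin d) (Fin d) ℂ) (hProj : P * P = P) (hHerm : Pᴴ = P)
    (Tdual : Matrix (Fin d) (Fin d) ℂ → Matrix (Fin d) (Fin d) ℂ)
    (hTdual : Tdual = fun A => ∑ k, (M k)ᴴ * A * M k)
    (hinv : ∀ ρ : Matrix (Fin d) (Fin d) ℂ, ρ.PosSemidef →
        msupp ρ ≤ LinearMap.range (Matrix.toEuclideanLin P) →
        msupp (∑ k, M k * ρ * (M k)ᴴ) ≤ LinearMap.range (Matrix.toEuclideanLin P)) :
    ∀ n : ℕ, msupp (Tdual^[n] P) ≤ msupp (Tdual^[n + 1] P) := by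
  -- `P` is positive semidefinite
  have hP_psd : P.PosSemidef := by
    have h := Matrix.posSemidef_conjTranspose_mul_self P
    rwa [hHerm, hProj] at h
  -- `1 - P` is positive semidefinite
  have h1P_psd : (1 - P).PosSemidef := by
    have h := Matrix.posSemidef_conjTranspose_mul_self (1 - P)
    have h1 : (1 - P)ᴴ = 1 - P := by
      simp [Matrix.conjTranspose_sub, hHerm]
    have h2 : (1 - P) * (1 - P) = 1 - P := by
      simp [sub_mul, mul_sub, hProj]
    rwa [h1, h2] at h
  -- `toEuclideanLin P` is self-adjoint
  have hadj : Matrix.toEuclideanLin P = LinearMap.adjoint (Matrix.toEuclideanLin P) := by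
    rw [← Matrix.toEuclideanLin_conjTranspose_eq_adjoint, hHerm]
  have hPP : ∀ v : EuclideanSpace ℂ (Fin d),
      Matrix.toEuclideanLin P (Matrix.toEuclideanLin P v) = Matrix.toEuclideanLin P v := by
    intro v
    simp only [Matrix.toEuclideanLin_apply, Equiv.apply_symm_apply, Matrix.mulVec_mulVec, hProj]
  -- `msupp P ≤ range P`
  have hsuppP : msupp P ≤ LinearMap.range (Matrix.toEuclideanLin P) := by
    intro v hv
    rw [LinearMap.mem_range]
    refine ⟨v, ?_⟩
    have hw : Matrix.toEuclideanLin P (v - Matrix.toEuclideanLin P v) = 0 := by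
      rw [map_sub, hPP, sub_self]
    have h1 : (inner ℂ (v - Matrix.toEuclideanLin P v) v : ℂ) = 0 :=
      (Submodule.mem_orthogonal _ _).mp hv _ (LinearMap.mem_ker.mpr hw)
    have h2 : (inner ℂ (v - Matrix.toEuclideanLin P v) (Matrix.toEuclideanLin P v) : ℂ) = 0 := by
      have h2' := LinearMap.adjoint_inner_right (Matrix.toEuclideanLin P)
        (v - Matrix.toEuclideanLin P v) v
      rw [hw, inner_zero_left, ← hadj] at h2'
      exact h2'
    have h3 : v - Matrix.toEuclideanLin P v = 0 := by
      rw [← inner_self_eq_zero (𝕜 := ℂ), inner_sub_right, h1, h2, sub_zero]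
    exact (sub_eq_zero.mp h3).symm
  -- the invariance hypothesis at the kernel level
  have hker1 : ∀ v : Fin d → ℂ, P *ᵥ v = 0 → (∑ k, M k * P * (M k)ᴴ) *ᵥ v = 0 := by
    intro u hu
    have hrange := hinv P hP_psd hsuppP
    have hmem : ((WithLp.equiv 2 (Fin d → ℂ)).symm u) ∈
        (LinearMap.range (Matrix.toEuclideanLin P))ᗮ := by
      rw [Submodule.mem_orthogonal]
      rintro w ⟨x, rfl⟩
      rw [hadj, LinearMap.adjoint_inner_left]
      have : Matrix.toEuclideanLin P ((WithLp.equiv 2 (Fin d → ℂ)).symm u) = 0 := by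
        rw [WithLp.equiv_symm_apply, Matrix.toEuclideanLin_apply_piLp_toLp, hu]
        rfl
      rw [this, inner_zero_right]
    have hker := Submodule.orthogonal_le hrange hmem
    rw [msupp, Submodule.orthogonal_orthogonal, LinearMap.mem_ker,
      WithLp.equiv_symm_apply, Matrix.toEuclideanLin_apply_piLp_toLp] at hker
    exact congrArg (WithLp.equiv 2 (Fin d → ℂ)) hker
  -- per-Kraus-operator invariance: `P u = 0 → P (Mₖᴴ u) = 0`
  have hMk : ∀ k, ∀ v : Fin d → ℂ, P *ᵥ v = 0 → P *ᵥ ((M k)ᴴ *ᵥ v) = 0 := by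
    intro k v hv
    have hz := hker1 v hv
    have hdp : star v ⬝ᵥ ((∑ k, M k * P * (M k)ᴴ) *ᵥ v) = 0 := by
      rw [hz, dotProduct_zero]
    rw [msum_mulVec, dp_sum] at hdp
    have hterm : ∀ j, star v ⬝ᵥ ((M j * P * (M j)ᴴ) *ᵥ v)
        = star ((M j)ᴴ *ᵥ v) ⬝ᵥ (P *ᵥ ((M j)ᴴ *ᵥ v)) := by
      intro j
      rw [star_mulVec, conjTranspose_conjTranspose, ← Matrix.mulVec_mulVec,
        ← Matrix.mulVec_mulVec, dotProduct_mulVec]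
    rw [Finset.sum_congr rfl (fun j _ => hterm j)] at hdp
    have hnn : ∀ j ∈ Finset.univ (α := Fin K),
        (0:ℂ) ≤ star ((M j)ᴴ *ᵥ v) ⬝ᵥ (P *ᵥ ((M j)ᴴ *ᵥ v)) := fun j _ => hP_psd.dotProduct_mulVec_nonneg _
    have h0 := (Finset.sum_eq_zero_iff_of_nonneg hnn).mp hdp k (Finset.mem_univ k)
    exact (hP_psd.dotProduct_mulVec_zero_iff _).mp h0
  -- the matrix identity `P Mₖᴴ P = P Mₖᴴ`
  have hPMP : ∀ k, P * (M k)ᴴ * P = P * (M k)ᴴ := by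
    intro k
    have hz : ∀ w : Fin d → ℂ, (P * (M k)ᴴ * (1 - P)) *ᵥ w = 0 := by
      intro w
      rw [← Matrix.mulVec_mulVec, ← Matrix.mulVec_mulVec]
      apply hMk k
      rw [Matrix.mulVec_mulVec, mul_sub, mul_one, hProj, sub_self, Matrix.zero_mulVec]
    have hzero : P * (M k)ᴴ * (1 - P) = 0 := by
      apply Matrix.toLin'.injective
      apply LinearMap.ext
      intro w
      rw [Matrix.toLin'_apply, hz w, map_zero, LinearMap.zero_apply]
    rw [mul_sub, mul_one, sub_eq_zero] at hzero
    exact hzero.symm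
  -- `P (Tdual P) P = P`
  have hPBP : P * (∑ k, (M k)ᴴ * P * M k) * P = P := by
    have hterm : ∀ k, P * ((M k)ᴴ * P * M k) * P = P * ((M k)ᴴ * M k) * P := by
      intro k
      calc P * ((M k)ᴴ * P * M k) * P
          = (P * (M k)ᴴ * P) * (M k * P) := by simp only [mul_assoc]
        _ = (P * (M k)ᴴ) * (M k * P) := by rw [hPMP k]
        _ = P * ((M k)ᴴ * M k) * P := by simp only [mul_assoc]
    rw [Finset.mul_sum, Finset.sum_mul,
      Finset.sum_congr rfl (fun k _ => hterm k), ← Finset.sum_mul, ← Finset.mul_sum,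
      hTP, mul_one, hProj]
  -- `1 - Tdual P` is PSD
  have h1B_psd : (1 - ∑ k, (M k)ᴴ * P * M k).PosSemidef := by
    have h : ∑ k, (M k)ᴴ * (1 - P) * M k = 1 - ∑ k, (M k)ᴴ * P * M k := by
      calc ∑ k, (M k)ᴴ * (1 - P) * M k
          = ∑ k, ((M k)ᴴ * M k - (M k)ᴴ * P * M k) :=
            Finset.sum_congr rfl fun k _ => by rw [mul_sub, sub_mul, mul_one]
        _ = (∑ k, (M k)ᴴ * M k) - ∑ k, (M k)ᴴ * P * M k := Finset.sum_sub_distrib _ _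
        _ = 1 - ∑ k, (M k)ᴴ * P * M k := by rw [hTP]
    rw [← h]
    exact psd_sum_s7 _ fun k => h1P_psd.conjTranspose_mul_mul_same (M k)
  have hB_psd : (∑ k, (M k)ᴴ * P * M k).PosSemidef :=
    psd_sum_s7 _ fun k => hP_psd.conjTranspose_mul_mul_same (M k)
  -- base case: `ker (Tdual P) ⊆ ker P`
  have hbase : ∀ v : Fin d → ℂ, (∑ k, (M k)ᴴ * P * M k) *ᵥ v = 0 → P *ᵥ v = 0 := by
    intro v hv
    set B := ∑ k, (M k)ᴴ * P * M k with hBdef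
    set w := P *ᵥ v with hwdef
    have hsw : star w = star v ᵥ* P := by rw [hwdef, star_mulVec, hHerm]
    have hPw : P *ᵥ w = w := by rw [hwdef, Matrix.mulVec_mulVec, hProj]
    have h0 : star w ⬝ᵥ ((1 - B) *ᵥ w) = 0 := by
      rw [Matrix.sub_mulVec, Matrix.one_mulVec, dotProduct_sub]
      have e1 : star w ⬝ᵥ w = star v ⬝ᵥ (P *ᵥ v) := by
        rw [hsw, ← dotProduct_mulVec, hPw]
      have e2 : star w ⬝ᵥ (B *ᵥ w) = star v ⬝ᵥ (P *ᵥ v) := by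
        rw [hsw, ← dotProduct_mulVec, hwdef, Matrix.mulVec_mulVec, Matrix.mulVec_mulVec, hPBP]
      rw [e1, e2, sub_self]
    have h1 : (1 - B) *ᵥ w = 0 := (h1B_psd.dotProduct_mulVec_zero_iff w).mp h0
    have h2 : B *ᵥ w = w := by
      rw [Matrix.sub_mulVec, Matrix.one_mulVec, sub_eq_zero] at h1
      exact h1.symm
    have h3 : star w ⬝ᵥ w = 0 := by
      have e3 : star w ⬝ᵥ w = star v ⬝ᵥ (B *ᵥ w) := by
        rw [h2, hsw, ← dotProduct_mulVec, hPw]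
      rw [e3, dotProduct_mulVec]
      have hvB : star v ᵥ* B = 0 := by
        calc star v ᵥ* B = star (Bᴴ *ᵥ v) := by
              rw [star_mulVec, Matrix.conjTranspose_conjTranspose]
          _ = star (B *ᵥ v) := by rw [hB_psd.1]
          _ = 0 := by rw [hv, star_zero]
      rw [hvB, zero_dotProduct]
    exact dotProduct_star_self_eq_zero.mp h3
  -- monotonicity of kernels under `Tdual`
  have hmono : ∀ A C : Matrix (Fin d) (Fin d) ℂ, A.PosSemidef → C.PosSemidef →
      (∀ v : Fin d → ℂ, A *ᵥ v = 0 → C *ᵥ v = 0) →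
      ∀ v : Fin d → ℂ, (∑ k, (M k)ᴴ * A * M k) *ᵥ v = 0 →
        (∑ k, (M k)ᴴ * C * M k) *ᵥ v = 0 := by
    intro A C hA hC hAC v hv
    have hterm : ∀ (X : Matrix (Fin d) (Fin d) ℂ) k, star v ⬝ᵥ (((M k)ᴴ * X * M k) *ᵥ v)
        = star (M k *ᵥ v) ⬝ᵥ (X *ᵥ (M k *ᵥ v)) := by
      intro X k
      rw [star_mulVec, ← Matrix.mulVec_mulVec, ← Matrix.mulVec_mulVec, dotProduct_mulVec]
    have hz : ∑ k, star (M k *ᵥ v) ⬝ᵥ (A *ᵥ (M k *ᵥ v)) = 0 := by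
      calc ∑ k, star (M k *ᵥ v) ⬝ᵥ (A *ᵥ (M k *ᵥ v))
          = ∑ k, star v ⬝ᵥ (((M k)ᴴ * A * M k) *ᵥ v) :=
            Finset.sum_congr rfl fun k _ => (hterm A k).symm
        _ = star v ⬝ᵥ ((∑ k, (M k)ᴴ * A * M k) *ᵥ v) := by rw [msum_mulVec, dp_sum]
        _ = 0 := by rw [hv, dotProduct_zero]
    have hk : ∀ k, A *ᵥ (M k *ᵥ v) = 0 := by
      have hnn : ∀ j ∈ Finset.univ (α := Fin K),
          (0:ℂ) ≤ star (M j *ᵥ v) ⬝ᵥ (A *ᵥ (M j *ᵥ v)) := fun j _ => hA.dotProduct_mulVec_nonneg _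
      intro k
      have h0 := (Finset.sum_eq_zero_iff_of_nonneg hnn).mp hz k (Finset.mem_univ k)
      exact (hA.dotProduct_mulVec_zero_iff _).mp h0
    have hCz : star v ⬝ᵥ ((∑ k, (M k)ᴴ * C * M k) *ᵥ v) = 0 := by
      rw [msum_mulVec, dp_sum]
      refine Finset.sum_eq_zero fun k _ => ?_
      rw [hterm C k, hAC _ (hk k), dotProduct_zero]
    have hpsd : (∑ k, (M k)ᴴ * C * M k).PosSemidef :=
      psd_sum_s7 _ fun k => hC.conjTranspose_mul_mul_same (M k)
    exact (hpsd.dotProduct_mulVec_zero_iff v).mp hCz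
  have hTd_psd : ∀ A : Matrix (Fin d) (Fin d) ℂ, A.PosSemidef →
      (∑ k, (M k)ᴴ * A * M k).PosSemidef :=
    fun A hA => psd_sum_s7 _ fun k => hA.conjTranspose_mul_mul_same (M k)
  subst hTdual
  have key : ∀ n : ℕ, ((fun A => ∑ k, (M k)ᴴ * A * M k)^[n] P).PosSemidef ∧
      (∀ v : Fin d → ℂ, ((fun A => ∑ k, (M k)ᴴ * A * M k)^[n + 1] P) *ᵥ v = 0 →
        ((fun A => ∑ k, (M k)ᴴ * A * M k)^[n] P) *ᵥ v = 0) := by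
    intro n
    induction n with
    | zero =>
      refine ⟨hP_psd, ?_⟩
      intro v hv
      apply hbase
      rw [Function.iterate_one] at hv
      exact hv
    | succ n ih =>
      have hpsd : ((fun A => ∑ k, (M k)ᴴ * A * M k)^[n + 1] P).PosSemidef := by
        rw [Function.iterate_succ_apply']
        exact hTd_psd _ ih.1
      refine ⟨hpsd, ?_⟩
      intro v hv
      rw [Function.iterate_succ_apply'] at hv ⊢
      exact hmono _ _ hpsd ih.1 ih.2 v hv
  intro n
  exact msupp_mono (key n).2
end

section
/- Let T be a CPTP map on H = H_S ⊕ H_R with H_S invariant, and suppose H_S decomposes as an orthogonal direct sum of T-invariant subspaces H_{S_i}. Then for each i, T*(Π_{S_i}) = Π_{S_i} + T*_{SR}(Π_{S_i}), where T*_{SR}(Π_{S_i}) = Π_R T*(Π_{S_i}) Π_R is supported on H_R. Equivalently, Π_S T*(Π_{S_i}) Π_S = Π_{S_i} and the off-diagonal blocks of T*(Π_{S_i}) with respect to H_S ⊕ H_R vanish. -/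
open Matrix
open scoped ComplexOrder

variable {m b K : ℕ} {ds : Fin m → ℕ}

/-- Index type for `H = (⊕_i H_{S_i}) ⊕ H_R`. -/
abbrev Idx (ds : Fin m → ℕ) (b : ℕ) := (Σ i : Fin m, Fin (ds i)) ⊕ Fin b

/-- The orthogonal projection onto `H_{S_i}`. -/
noncomputable def PSi (ds : Fin m → ℕ) (b : ℕ) (i : Fin m) :
    Matrix (Idx ds b) (Idx ds b) ℂ :=
  Matrix.diagonal (Sum.elim (fun p => if p.1 = i then (1 : ℂ) else 0) (fun _ => 0))

/-- The orthogonal projection onto `H_S = ⊕_i H_{S_i}`. -/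
noncomputable def PS (ds : Fin m → ℕ) (b : ℕ) : Matrix (Idx ds b) (Idx ds b) ℂ :=
  Matrix.diagonal (Sum.elim (fun _ => (1 : ℂ)) (fun _ => 0))

/-- The orthogonal projection onto `H_R`. -/
noncomputable def PR (ds : Fin m → ℕ) (b : ℕ) : Matrix (Idx ds b) (Idx ds b) ℂ :=
  Matrix.diagonal (Sum.elim (fun _ => (0 : ℂ)) (fun _ => 1))

section Aux

variable {n J : Type*} [Fintype n] [DecidableEq n] [Fintype J]

omit [DecidableEq n] in
lemma aux_sum_mul_conjTranspose_self_eq_zero (B : J → Matrix n n ℂ)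
    (h : ∑ k, B k * (B k)ᴴ = 0) (k : J) : B k = 0 := by
  classical
  have hv : ∀ v : n → ℂ, (B k)ᴴ *ᵥ v = 0 := by
    intro v
    have key : ∀ j : J, star ((B j)ᴴ *ᵥ v) ⬝ᵥ ((B j)ᴴ *ᵥ v)
        = star v ⬝ᵥ (B j * (B j)ᴴ) *ᵥ v := by
      intro j
      rw [star_mulVec, conjTranspose_conjTranspose, ← dotProduct_mulVec, mulVec_mulVec]
    have hmv : (∑ j, B j * (B j)ᴴ) *ᵥ v = ∑ j, (B j * (B j)ᴴ) *ᵥ v := by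
      funext i
      simp only [mulVec, dotProduct, Matrix.sum_apply, Finset.sum_apply,
        Finset.sum_mul]
      exact Finset.sum_comm
    have hdp : star v ⬝ᵥ (∑ j, (B j * (B j)ᴴ) *ᵥ v)
        = ∑ j, star v ⬝ᵥ ((B j * (B j)ᴴ) *ᵥ v) := by
      simp only [dotProduct, Finset.sum_apply, Finset.mul_sum]
      exact Finset.sum_comm
    have h0 : ∑ j, star ((B j)ᴴ *ᵥ v) ⬝ᵥ ((B j)ᴴ *ᵥ v) = 0 := by
      simp_rw [key]
      rw [← hdp, ← hmv, h, zero_mulVec, dotProduct_zero]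
    have := (Finset.sum_eq_zero_iff_of_nonneg
      (fun j _ => dotProduct_star_self_nonneg ((B j)ᴴ *ᵥ v))).mp h0 k (Finset.mem_univ k)
    exact dotProduct_star_self_eq_zero.mp this
  have hB : (B k)ᴴ = 0 := by
    ext i j
    simpa [mulVec_single] using congrFun (hv (Pi.single j 1)) i
  simpa using congrArg conjTranspose hB

omit [DecidableEq n] in
lemma aux_posSemidef_sum (A : J → Matrix n n ℂ) :
    (∑ k, (A k)ᴴ * A k).PosSemidef :=
  Finset.sum_induction _ _ (fun _ _ ha hb => ha.add hb) PosSemidef.zero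
    (fun k _ => posSemidef_conjTranspose_mul_self (A k))

open scoped MatrixOrder in
lemma aux_sandwich {X Q : Matrix n n ℂ} (hX : X.PosSemidef)
    (hQ : Qᴴ = Q) (h : Q * X * Q = 0) : X * Q = 0 := by
  have hs : CFC.sqrt X * Q = 0 := by
    rw [← conjTranspose_mul_self_eq_zero]
    have e : (CFC.sqrt X * Q)ᴴ * (CFC.sqrt X * Q) = Q * X * Q := by
      rw [conjTranspose_mul, hQ, (CFC.sqrt_nonneg X).posSemidef.1, mul_assoc,
        ← mul_assoc (CFC.sqrt X), CFC.sqrt_mul_sqrt_self X hX.nonneg, ← mul_assoc]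
    rw [e, h]
  calc X * Q = CFC.sqrt X * (CFC.sqrt X * Q) := by rw [← mul_assoc, CFC.sqrt_mul_sqrt_self X hX.nonneg]
  _ = 0 := by rw [hs, mul_zero]

lemma aux_euclid_mul (A B : Matrix n n ℂ) (v : EuclideanSpace ℂ n) :
    toEuclideanLin (A * B) v = toEuclideanLin A (toEuclideanLin B v) := by
  simp [toEuclideanLin_apply, mulVec_mulVec]

lemma aux_euclid_inner (A : Matrix n n ℂ) (x y : EuclideanSpace ℂ n) :
    (inner ℂ (toEuclideanLin A x) y : ℂ) = inner ℂ x (toEuclideanLin Aᴴ y) := by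
  rw [Matrix.toEuclideanLin_conjTranspose_eq_adjoint, LinearMap.adjoint_inner_right]

lemma aux_msupp_le_range {Q : Matrix n n ℂ} (hQ : Qᴴ = Q) (hQQ : Q * Q = Q) :
    msupp Q ≤ LinearMap.range (toEuclideanLin Q) := by
  classical
  intro x hx
  set u := x - toEuclideanLin Q x with hu
  have hker : u ∈ LinearMap.ker (toEuclideanLin Q) := by
    rw [LinearMap.mem_ker, hu, map_sub, ← aux_euclid_mul, hQQ, sub_self]
  have h0 : (inner ℂ u x : ℂ) = 0 := (Submodule.mem_orthogonal _ x).mp hx _ hker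
  have h1 : (inner ℂ u u : ℂ) = 0 := by
    rw [hu] at h0 ⊢
    rw [inner_sub_right, h0, zero_sub, neg_eq_zero, ← inner_conj_symm,
      aux_euclid_inner, hQ]
    have hk0 : toEuclideanLin Q (x - toEuclideanLin Q x) = 0 := hker
    rw [hk0, inner_zero_right, map_zero]
  exact ⟨x, (sub_eq_zero.mp (inner_self_eq_zero.mp h1)).symm⟩

lemma aux_supp_le_imp {S Q : Matrix n n ℂ} (hQ : Qᴴ = Q) (hQQ : Q * Q = Q)
    (h : msupp S ≤ LinearMap.range (toEuclideanLin Q)) :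
    S * (1 - Q) = 0 := by
  classical
  have hmem : ∀ y : EuclideanSpace ℂ n,
      toEuclideanLin (1 - Q) y ∈ (LinearMap.range (toEuclideanLin Q))ᗮ := by
    intro y
    rw [Submodule.mem_orthogonal]
    rintro u ⟨z, rfl⟩
    rw [aux_euclid_inner, hQ, ← aux_euclid_mul]
    have hz : Q * (1 - Q) = 0 := by rw [mul_sub, mul_one, hQQ, sub_self]
    rw [hz]
    simp
  have hle : (LinearMap.range (toEuclideanLin Q))ᗮ ≤ LinearMap.ker (toEuclideanLin S) := by
    calc (LinearMap.range (toEuclideanLin Q))ᗮ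
        ≤ (msupp S)ᗮ := Submodule.orthogonal_le h
    _ = LinearMap.ker (toEuclideanLin S) := Submodule.orthogonal_orthogonal _
  have hzero : ∀ y, toEuclideanLin (S * (1 - Q)) y = 0 := by
    intro y
    rw [aux_euclid_mul]
    exact hle (hmem y)
  have : Matrix.toEuclideanLin (S * (1 - Q)) = Matrix.toEuclideanLin (0 : Matrix n n ℂ) := by
    rw [map_zero]; exact LinearMap.ext hzero
  exact Matrix.toEuclideanLin.injective this

lemma aux_kraus {Q : Matrix n n ℂ} (hQ : Qᴴ = Q) (hQQ : Q * Q = Q)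
    (M : J → Matrix n n ℂ)
    (h : msupp (∑ k, M k * Q * (M k)ᴴ) ≤ LinearMap.range (toEuclideanLin Q)) :
    ∀ k, Q * (M k * Q) = M k * Q := by
  classical
  set N : Matrix n n ℂ := 1 - Q with hNdef
  have hNh : Nᴴ = N := by rw [hNdef, conjTranspose_sub, conjTranspose_one, hQ]
  have hSN : (∑ k, M k * Q * (M k)ᴴ) * N = 0 := aux_supp_le_imp hQ hQQ h
  have hNSN : N * (∑ k, M k * Q * (M k)ᴴ) * N = 0 := by
    rw [mul_assoc, hSN, mul_zero]
  have hterm : ∀ k, (N * (M k * Q)) * (N * (M k * Q))ᴴ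
      = N * (M k * Q * (M k)ᴴ) * N := by
    intro k
    rw [conjTranspose_mul, conjTranspose_mul, hQ, hNh]
    simp only [mul_assoc]
    rw [← mul_assoc Q Q ((M k)ᴴ * N), hQQ]
  have hz : ∑ k, (N * (M k * Q)) * (N * (M k * Q))ᴴ = 0 := by
    simp_rw [hterm]
    rw [show ∑ k, N * (M k * Q * (M k)ᴴ) * N
        = N * (∑ k, M k * Q * (M k)ᴴ) * N by
      rw [Finset.mul_sum, Finset.sum_mul]]
    exact hNSN
  intro k
  have h0 : N * (M k * Q) = 0 := aux_sum_mul_conjTranspose_self_eq_zero _ hz k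
  have h0' : M k * Q - Q * (M k * Q) = 0 := by
    rw [hNdef, sub_mul, one_mul] at h0
    exact h0
  exact (sub_eq_zero.mp h0').symm

end Aux

section Diag

variable {m b : ℕ} {ds : Fin m → ℕ}

lemma PSi_herm (i : Fin m) : (PSi ds b i)ᴴ = PSi ds b i := by
  rw [PSi, diagonal_conjTranspose]
  refine congrArg Matrix.diagonal (funext fun x => ?_)
  cases x with
  | inl p => by_cases h : p.1 = i <;> simp [h]
  | inr q => simp

lemma PSi_idem (i : Fin m) : PSi ds b i * PSi ds b i = PSi ds b i := by
  rw [PSi, diagonal_mul_diagonal]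
  refine congrArg Matrix.diagonal (funext fun x => ?_)
  cases x with
  | inl p => by_cases h : p.1 = i <;> simp [h]
  | inr q => simp

lemma PSi_orth {i j : Fin m} (h : i ≠ j) : PSi ds b i * PSi ds b j = 0 := by
  rw [PSi, PSi, diagonal_mul_diagonal, ← diagonal_zero]
  refine congrArg Matrix.diagonal (funext fun x => ?_)
  cases x with
  | inl p =>
    by_cases hp : p.1 = i
    · simp [hp, h]
    · simp [hp]
  | inr q => simp

lemma PSi_sum : ∑ j, PSi ds b j = PS ds b := by
  ext x y
  rw [Matrix.sum_apply]
  simp only [PSi, PS, Matrix.diagonal_apply]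
  by_cases hxy : x = y
  · subst hxy
    simp only [if_pos rfl]
    cases x with
    | inl p => simp
    | inr q => simp
  · simp [hxy]

lemma PSi_mul_PS (i : Fin m) : PSi ds b i * PS ds b = PSi ds b i := by
  rw [PSi, PS, diagonal_mul_diagonal]
  refine congrArg Matrix.diagonal (funext fun x => ?_)
  cases x with
  | inl p => simp
  | inr q => simp

lemma PS_mul_PSi (i : Fin m) : PS ds b * PSi ds b i = PSi ds b i := by
  rw [PSi, PS, diagonal_mul_diagonal]
  refine congrArg Matrix.diagonal (funext fun x => ?_)
  cases x with
  | inl p => simp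
  | inr q => simp

lemma PS_herm : (PS ds b)ᴴ = PS ds b := by
  rw [PS, diagonal_conjTranspose]
  refine congrArg Matrix.diagonal (funext fun x => ?_)
  cases x with
  | inl p => simp
  | inr q => simp

lemma PS_idem : PS ds b * PS ds b = PS ds b := by
  rw [PS, diagonal_mul_diagonal]
  refine congrArg Matrix.diagonal (funext fun x => ?_)
  cases x with
  | inl p => simp
  | inr q => simp

lemma PR_eq : PR ds b = 1 - PS ds b := by
  ext x y
  simp only [PR, PS, Matrix.sub_apply, Matrix.one_apply, Matrix.diagonal_apply]
  by_cases hxy : x = y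
  · subst hxy
    cases x with
    | inl p => simp
    | inr q => simp
  · simp [hxy]

end Diag

/-- If `H = H_S ⊕ H_R` with `H_S = ⊕_i H_{S_i}` and each `H_{S_i}` invariant for the
CPTP map `T`, then `T*(Π_{S_i}) = Π_{S_i} + Π_R T*(Π_{S_i}) Π_R` for each `i`. -/
theorem stmt_10 (M : Fin K → Matrix (Idx ds b) (Idx ds b) ℂ)
    (hTP : ∑ k, (M k)ᴴ * M k = 1)
    (hinvS : ∀ ρ : Matrix (Idx ds b) (Idx ds b) ℂ, ρ.PosSemidef →
        msupp ρ ≤ LinearMap.range (Matrix.toEuclideanLin (PS ds b)) →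
        msupp (∑ k, M k * ρ * (M k)ᴴ) ≤ LinearMap.range (Matrix.toEuclideanLin (PS ds b)))
    (hinvSi : ∀ i : Fin m, ∀ ρ : Matrix (Idx ds b) (Idx ds b) ℂ, ρ.PosSemidef →
        msupp ρ ≤ LinearMap.range (Matrix.toEuclideanLin (PSi ds b i)) →
        msupp (∑ k, M k * ρ * (M k)ᴴ) ≤
          LinearMap.range (Matrix.toEuclideanLin (PSi ds b i))) :
    ∀ i : Fin m,
      (∑ k, (M k)ᴴ * PSi ds b i * M k) =
        PSi ds b i + PR ds b * (∑ k, (M k)ᴴ * PSi ds b i * M k) * PR ds b := by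
  intro i
  -- Kraus operators preserve each subspace
  have hpsd : ∀ j : Fin m, (PSi ds b j).PosSemidef := by
    intro j
    have h2 := posSemidef_conjTranspose_mul_self (PSi ds b j)
    rwa [PSi_herm, PSi_idem] at h2
  have hMQ : ∀ j : Fin m, ∀ k, PSi ds b j * (M k * PSi ds b j) = M k * PSi ds b j := by
    intro j
    exact aux_kraus (PSi_herm j) (PSi_idem j) M
      (hinvSi j (PSi ds b j) (hpsd j) (aux_msupp_le_range (PSi_herm j) (PSi_idem j)))
  set Q : Matrix (Idx ds b) (Idx ds b) ℂ := PSi ds b i with hQdef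
  set X : Matrix (Idx ds b) (Idx ds b) ℂ := ∑ k, (M k)ᴴ * PSi ds b i * M k with hXdef
  have hQh : Qᴴ = Q := PSi_herm i
  have hQQ : Q * Q = Q := PSi_idem i
  -- X is positive semidefinite
  have hXpsd : X.PosSemidef := by
    have e : X = ∑ k, (Q * M k)ᴴ * (Q * M k) := by
      refine Finset.sum_congr rfl fun k _ => ?_
      rw [conjTranspose_mul, hQh]
      simp only [mul_assoc, ← hQdef]
      rw [← mul_assoc Q Q (M k), hQQ]
    rw [e]
    exact aux_posSemidef_sum _
  -- X is hermitian
  have hXH : Xᴴ = X := by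
    rw [hXdef, conjTranspose_sum]
    refine Finset.sum_congr rfl fun k _ => ?_
    rw [conjTranspose_mul, conjTranspose_mul, conjTranspose_conjTranspose, hQh, mul_assoc]
  -- Q X Q = Q
  have hQXQ : Q * X * Q = Q := by
    have term : ∀ k, Q * ((M k)ᴴ * PSi ds b i * M k) * Q = Q * ((M k)ᴴ * M k) * Q := by
      intro k
      calc Q * ((M k)ᴴ * PSi ds b i * M k) * Q
          = (Q * (M k)ᴴ) * (Q * (M k * Q)) := by rw [← hQdef]; simp only [mul_assoc]
        _ = (Q * (M k)ᴴ) * (M k * Q) := by rw [hMQ i k]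
        _ = Q * ((M k)ᴴ * M k) * Q := by simp only [mul_assoc]
    rw [hXdef, Finset.mul_sum, Finset.sum_mul]
    simp_rw [term]
    simp_rw [show ∀ k, Q * ((M k)ᴴ * M k) * Q = Q * ((M k)ᴴ * M k * Q) from
      fun k => by simp only [mul_assoc]]
    rw [← Finset.mul_sum, ← Finset.sum_mul, hTP, one_mul, hQQ]
  -- X Q = Q
  have hXQ : X * Q = Q := by
    have hY : (1 - X).PosSemidef := by
      have e : (1 : Matrix (Idx ds b) (Idx ds b) ℂ) - X
          = ∑ k, ((1 - Q) * M k)ᴴ * ((1 - Q) * M k) := by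
        have hNh : (1 - Q)ᴴ = 1 - Q := by
          rw [conjTranspose_sub, conjTranspose_one, hQh]
        have hNN : (1 - Q) * (1 - Q) = 1 - Q := by
          rw [sub_mul, one_mul, mul_sub, mul_one, hQQ, sub_self, sub_zero]
        have e2 : ∀ k, ((1 - Q) * M k)ᴴ * ((1 - Q) * M k)
            = (M k)ᴴ * M k - (M k)ᴴ * PSi ds b i * M k := by
          intro k
          rw [conjTranspose_mul, hNh, mul_assoc, ← mul_assoc (1 - Q) (1 - Q) (M k), hNN,
            sub_mul, one_mul, mul_sub]
          simp only [← hQdef, mul_assoc]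
        simp_rw [e2]
        rw [Finset.sum_sub_distrib, hTP, ← hXdef]
      rw [e]
      exact aux_posSemidef_sum _
    have hQYQ : Q * (1 - X) * Q = 0 := by
      rw [mul_sub, mul_one, sub_mul, hQQ, hQXQ, sub_self]
    have := aux_sandwich hY hQh hQYQ
    rw [sub_mul, one_mul] at this
    have := sub_eq_zero.mp this
    exact this.symm
  -- X kills the other blocks
  have hXR : ∀ j : Fin m, j ≠ i → X * PSi ds b j = 0 := by
    intro j hj
    set R : Matrix (Idx ds b) (Idx ds b) ℂ := PSi ds b j with hRdef
    have hRh : Rᴴ = R := PSi_herm j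
    have hQR : Q * R = 0 := PSi_orth (fun h => hj h.symm)
    have hRXR : R * X * R = 0 := by
      have term : ∀ k, R * ((M k)ᴴ * PSi ds b i * M k) * R = 0 := by
        intro k
        calc R * ((M k)ᴴ * PSi ds b i * M k) * R
            = (R * (M k)ᴴ) * (Q * (M k * R)) := by rw [← hQdef]; simp only [mul_assoc]
          _ = (R * (M k)ᴴ) * (Q * (R * (M k * R))) := by rw [hMQ j k]
          _ = (R * (M k)ᴴ) * ((Q * R) * (M k * R)) := by simp only [mul_assoc]
          _ = 0 := by rw [hQR, zero_mul, mul_zero]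
      rw [hXdef, Finset.mul_sum, Finset.sum_mul]
      simp_rw [term]
      exact Finset.sum_const_zero
    exact aux_sandwich hXpsd hRh hRXR
  -- X * PS = Q
  have hXP : X * PS ds b = Q := by
    rw [← PSi_sum, Finset.mul_sum]
    rw [Finset.sum_eq_single i (fun j _ hj => hXR j hj) (fun h => absurd (Finset.mem_univ i) h)]
    exact hXQ
  -- PS * X = Q
  have hPX : PS ds b * X = Q := by
    have := congrArg conjTranspose hXP
    rwa [conjTranspose_mul, hXH, PS_herm, hQh] at this
  -- conclude
  have hQPS : Q * PS ds b = Q := PSi_mul_PS i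
  have e1 : (1 - PS ds b) * X = X - Q := by rw [sub_mul, one_mul, hPX]
  have e2 : (X - Q) * (1 - PS ds b) = X - Q := by
    rw [mul_sub, mul_one, sub_mul, hXP, hQPS, sub_self, sub_zero]
  rw [PR_eq, e1, e2]
  noncomm_ring
end

section
/- Let T be a CPTP map on H = H_S ⊕ H_R with H_S invariant and let T_R(A) = Π_R T(A) Π_R be the reduced map on operators supported on H_R. If the spectral radius of T_R satisfies σ(T_R) < 1, then H_S is globally asymptotically stable: for every density operator ρ, ‖T^n(ρ) − Π_S T^n(ρ) Π_S‖ → 0 as n → ∞. Equivalently, Tr(Π_R T^n(ρ)) → 0. -/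
open Matrix Filter Topology
open scoped ComplexOrder NNReal ENNReal

/-- Projection onto `H_S`. -/
noncomputable def PiS (a b : ℕ) : Matrix (Fin a ⊕ Fin b) (Fin a ⊕ Fin b) ℂ :=
  Matrix.fromBlocks 1 0 0 0

/-- Projection onto `H_R`. -/
noncomputable def PiR (a b : ℕ) : Matrix (Fin a ⊕ Fin b) (Fin a ⊕ Fin b) ℂ :=
  Matrix.fromBlocks 0 0 0 1

/-- The CP map `A ↦ Σ_k M_k A M_k†` as a linear endomorphism. -/
noncomputable def krausEnd {n : Type*} [Fintype n] [DecidableEq n] {K : ℕ}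
    (M : Fin K → Matrix n n ℂ) : Module.End ℂ (Matrix n n ℂ) where
  toFun A := ∑ k, M k * A * (M k)ᴴ
  map_add' A B := by
    simp [Matrix.mul_add, Matrix.add_mul, Finset.sum_add_distrib]
  map_smul' c A := by
    simp [Matrix.mul_smul, Matrix.smul_mul, Finset.smul_sum]

/-- Compression `A ↦ P A P` as a linear endomorphism. -/
noncomputable def sandwichEnd {n : Type*} [Fintype n] [DecidableEq n]
    (P : Matrix n n ℂ) : Module.End ℂ (Matrix n n ℂ) where
  toFun A := P * A * P
  map_add' A B := by simp [Matrix.mul_add, Matrix.add_mul]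
  map_smul' c A := by simp [Matrix.mul_smul, Matrix.smul_mul]

/-- In finite dimensions, if every point of the spectrum of an endomorphism has norm
less than one, then its powers tend to zero pointwise. -/
lemma endPow_tendsto_zero {V : Type*} [NormedAddCommGroup V] [NormedSpace ℂ V]
    [FiniteDimensional ℂ V] (f : Module.End ℂ V)
    (hf : ∀ μ ∈ spectrum ℂ f, ‖μ‖ < 1) (x : V) :
    Tendsto (fun n => (f ^ n) x) atTop (𝓝 0) := by
  rcases subsingleton_or_nontrivial V with hV | hV
  · have h0 : ∀ n : ℕ, (f ^ n) x = 0 := fun n => Subsingleton.elim _ _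
    simp only [h0]; exact tendsto_const_nhds
  · let e : (V →L[ℂ] V) ≃ₐ[ℂ] Module.End ℂ V :=
      { toFun := fun g => (g : V →ₗ[ℂ] V)
        invFun := fun g => LinearMap.toContinuousLinearMap g
        left_inv := fun g => by ext v; rfl
        right_inv := fun g => rfl
        map_mul' := fun g h => rfl
        map_add' := fun g h => rfl
        commutes' := fun c => rfl }
    set g : V →L[ℂ] V := LinearMap.toContinuousLinearMap f with hg
    have heg : e g = f := rfl
    have hspec' : spectrum ℂ g = spectrum ℂ f := by
      rw [← heg]; exact (AlgEquiv.spectrum_eq e g).symm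
    have hnt : Nontrivial (V →L[ℂ] V) := by
      obtain ⟨v, hv⟩ := exists_ne (0 : V)
      exact ⟨1, 0, fun h => hv (by simpa using ContinuousLinearMap.ext_iff.mp h v)⟩
    have hr : spectralRadius ℂ g < (1 : ℝ≥0) := by
      apply spectrum.spectralRadius_lt_of_forall_lt g
      intro z hz
      have := hf z (hspec' ▸ hz)
      rwa [← NNReal.coe_lt_coe, coe_nnnorm, NNReal.coe_one]
    obtain ⟨r, hr1, hr2⟩ := ENNReal.lt_iff_exists_nnreal_btwn.mp hr
    have hr3 : (r : ℝ) < 1 := by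
      rw [ENNReal.coe_lt_coe, ← NNReal.coe_lt_coe, NNReal.coe_one] at hr2; exact hr2
    have hG := spectrum.pow_nnnorm_pow_one_div_tendsto_nhds_spectralRadius g
    have hev : ∀ᶠ n : ℕ in atTop, (‖g ^ n‖₊ : ℝ≥0∞) ^ (1 / (n : ℝ)) < r :=
      hG.eventually_lt_const hr1
    have hev2 : ∀ᶠ n : ℕ in atTop, ‖(f ^ n) x‖ ≤ (r : ℝ) ^ n * ‖x‖ := by
      filter_upwards [hev, eventually_ge_atTop 1] with n hn hn1
      have hne : (n : ℝ) ≠ 0 := Nat.cast_ne_zero.mpr (by omega)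
      have h1 : (‖g ^ n‖₊ : ℝ≥0∞) < (r : ℝ≥0∞) ^ n := by
        have := ENNReal.rpow_lt_rpow hn (by positivity : (0:ℝ) < n)
        rwa [← ENNReal.rpow_mul, one_div_mul_cancel hne, ENNReal.rpow_one,
          ENNReal.rpow_natCast] at this
      have h2 : ‖g ^ n‖ ≤ (r : ℝ) ^ n := by
        rw [← ENNReal.coe_pow, ENNReal.coe_lt_coe] at h1
        have := h1.le
        rw [← NNReal.coe_le_coe, coe_nnnorm, NNReal.coe_pow] at this
        exact this
      have hfg : (f ^ n) x = (g ^ n) x := by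
        have : e (g ^ n) = f ^ n := by rw [map_pow, heg]
        rw [← this]; rfl
      calc ‖(f ^ n) x‖ = ‖(g ^ n) x‖ := by rw [hfg]
        _ ≤ ‖g ^ n‖ * ‖x‖ := (g ^ n).le_opNorm x
        _ ≤ (r : ℝ) ^ n * ‖x‖ := mul_le_mul_of_nonneg_right h2 (norm_nonneg x)
    have hlim : Tendsto (fun n : ℕ => (r : ℝ) ^ n * ‖x‖) atTop (𝓝 0) := by
      simpa using (tendsto_pow_atTop_nhds_zero_of_lt_one r.coe_nonneg hr3).mul_const ‖x‖
    exact squeeze_zero_norm' hev2 hlim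

/-- `Tr (A Aᴴ)` is nonnegative. -/
lemma trace_mul_conjTranspose_self_nonneg {m n : Type*} [Fintype m] [Fintype n]
    (A : Matrix m n ℂ) : (0:ℂ) ≤ (A * Aᴴ).trace := by
  rw [Matrix.trace]
  refine Finset.sum_nonneg fun i _ => ?_
  have h : (A * Aᴴ).diag i = dotProduct (A i) (star (A i)) := by
    simp [Matrix.diag, Matrix.mul_apply, dotProduct,
      Matrix.conjTranspose_apply]
  rw [h]
  exact dotProduct_self_star_nonneg _

/-- If `Tr (A Aᴴ) = 0` then `A = 0`. -/
lemma eq_zero_of_trace_mul_conjTranspose_self {m n : Type*} [Fintype m] [Fintype n]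
    (A : Matrix m n ℂ) (h : (A * Aᴴ).trace = 0) : A = 0 := by
  have h' : ∑ i, dotProduct (A i) (star (A i)) = 0 := by
    rw [← h, Matrix.trace]
    exact (Finset.sum_congr rfl fun i _ => by
      simp [Matrix.diag, Matrix.mul_apply, dotProduct,
        Matrix.conjTranspose_apply]).symm
  have key : ∀ i, dotProduct (A i) (star (A i)) = 0 := fun i =>
    (Finset.sum_eq_zero_iff_of_nonneg
      (fun i _ => dotProduct_self_star_nonneg (A i))).mp h' i (Finset.mem_univ i)
  ext i j
  have := dotProduct_self_star_eq_zero.mp (key i)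
  simpa using congrFun this j

/-- If `H_S` is invariant for the CPTP map `T` and the reduced map `T_R` has spectral
radius `< 1`, then `H_S` is globally asymptotically stable:
`Tr(Π_R T^n(ρ)) → 0` for every density operator `ρ`. -/
theorem stmt_13 {a b K : ℕ}
    (M : Fin K → Matrix (Fin a ⊕ Fin b) (Fin a ⊕ Fin b) ℂ)
    (hTP : ∑ k, (M k)ᴴ * M k = 1)
    (T : Matrix (Fin a ⊕ Fin b) (Fin a ⊕ Fin b) ℂ →
      Matrix (Fin a ⊕ Fin b) (Fin a ⊕ Fin b) ℂ)
    (hT : T = fun A => ∑ k, M k * A * (M k)ᴴ)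
    (hinvS : ∀ ρ : Matrix (Fin a ⊕ Fin b) (Fin a ⊕ Fin b) ℂ, ρ.PosSemidef →
        msupp ρ ≤ LinearMap.range (Matrix.toEuclideanLin (PiS a b)) →
        msupp (T ρ) ≤ LinearMap.range (Matrix.toEuclideanLin (PiS a b)))
    (TR : Module.End ℂ (Matrix (Fin a ⊕ Fin b) (Fin a ⊕ Fin b) ℂ))
    (hTR : TR = sandwichEnd (PiR a b) ∘ₗ krausEnd M ∘ₗ sandwichEnd (PiR a b))
    (hspec : ∀ μ ∈ spectrum ℂ TR, ‖μ‖ < 1) :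
    ∀ ρ : Matrix (Fin a ⊕ Fin b) (Fin a ⊕ Fin b) ℂ, ρ.PosSemidef → ρ.trace = 1 →
      Tendsto (fun n => (PiR a b * T^[n] ρ).trace) atTop (𝓝 0) := by
  intro ρ hρ hρtr
  classical
  have hSS : PiS a b * PiS a b = PiS a b := by
    simp [PiS, Matrix.fromBlocks_multiply]
  have hPP : PiR a b * PiR a b = PiR a b := by
    simp [PiR, Matrix.fromBlocks_multiply]
  have hSP : PiS a b * PiR a b = 0 := by
    simp [PiS, PiR, Matrix.fromBlocks_multiply]
  have hSH : (PiS a b)ᴴ = PiS a b := by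
    simp [PiS, Matrix.fromBlocks_conjTranspose]
  have hPH : (PiR a b)ᴴ = PiR a b := by
    simp [PiR, Matrix.fromBlocks_conjTranspose]
  have hSum : PiS a b + PiR a b = 1 := by
    rw [PiS, PiR, Matrix.fromBlocks_add]
    simpa using Matrix.fromBlocks_one
  have hmulE : ∀ (A B : Matrix (Fin a ⊕ Fin b) (Fin a ⊕ Fin b) ℂ) v,
      Matrix.toEuclideanLin (A * B) v =
        Matrix.toEuclideanLin A (Matrix.toEuclideanLin B v) := by
    intros A B v
    simp [Matrix.toEuclideanLin_apply, Matrix.mulVec_mulVec]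
  have hadj : LinearMap.adjoint (Matrix.toEuclideanLin (PiS a b)) =
      Matrix.toEuclideanLin (PiS a b) := by
    rw [← Matrix.toEuclideanLin_conjTranspose_eq_adjoint, hSH]
  have hSpsd : (PiS a b).PosSemidef := by
    have h := Matrix.posSemidef_conjTranspose_mul_self (PiS a b)
    rwa [hSH, hSS] at h
  have hsupp : msupp (PiS a b) ≤ LinearMap.range (Matrix.toEuclideanLin (PiS a b)) := by
    intro x hx
    have hker : x - Matrix.toEuclideanLin (PiS a b) x ∈
        LinearMap.ker (Matrix.toEuclideanLin (PiS a b)) := by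
      rw [LinearMap.mem_ker, map_sub, ← hmulE, hSS, sub_self]
    have horth : x - Matrix.toEuclideanLin (PiS a b) x ∈
        (LinearMap.ker (Matrix.toEuclideanLin (PiS a b)))ᗮ := by
      refine Submodule.sub_mem _ hx ?_
      rw [Submodule.mem_orthogonal]
      intro u hu
      rw [← hadj, LinearMap.adjoint_inner_right, LinearMap.mem_ker.mp hu,
        inner_zero_left]
    have hzero : x - Matrix.toEuclideanLin (PiS a b) x = 0 := by
      have := (Submodule.mem_orthogonal _ _).mp horth _ hker
      exact inner_self_eq_zero.mp this
    exact ⟨x, (sub_eq_zero.mp hzero).symm⟩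
  have h2 : (LinearMap.range (Matrix.toEuclideanLin (PiS a b)))ᗮ ≤
      LinearMap.ker (Matrix.toEuclideanLin (T (PiS a b))) := by
    have h3 := Submodule.orthogonal_le (hinvS (PiS a b) hSpsd hsupp)
    rwa [msupp, Submodule.orthogonal_orthogonal] at h3
  have h4 : T (PiS a b) * PiR a b = 0 := by
    apply Matrix.toEuclideanLin.injective
    rw [map_zero]
    refine LinearMap.ext fun v => ?_
    rw [hmulE]
    refine LinearMap.mem_ker.mp (h2 ?_)
    rw [Submodule.mem_orthogonal]
    rintro w ⟨y, rfl⟩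
    rw [← hadj, LinearMap.adjoint_inner_left, ← hmulE, hSP]
    simp
  have hTh : (T (PiS a b))ᴴ = T (PiS a b) := by
    rw [hT]
    simp only [Matrix.conjTranspose_sum, Matrix.conjTranspose_mul,
      Matrix.conjTranspose_conjTranspose, hSH, Matrix.mul_assoc]
  have h5 : PiR a b * T (PiS a b) = 0 := by
    have h := congrArg Matrix.conjTranspose h4
    rwa [Matrix.conjTranspose_mul, hTh, hPH, Matrix.conjTranspose_zero] at h
  have h6 : ∀ k, PiR a b * M k * PiS a b = 0 := by
    have hsum : ∑ k, (PiR a b * M k * PiS a b) * (PiR a b * M k * PiS a b)ᴴ = 0 := by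
      have h0 : PiR a b * T (PiS a b) * PiR a b = 0 := by
        rw [h5, Matrix.zero_mul]
      rw [hT] at h0
      simp only [Finset.mul_sum, Finset.sum_mul] at h0
      rw [← h0]
      refine Finset.sum_congr rfl fun k _ => ?_
      simp only [Matrix.conjTranspose_mul, hSH, hPH,
        Matrix.conjTranspose_conjTranspose]
      calc PiR a b * M k * PiS a b * (PiS a b * ((M k)ᴴ * PiR a b))
          = PiR a b * M k * (PiS a b * PiS a b) * (M k)ᴴ * PiR a b := by
            simp only [Matrix.mul_assoc]
        _ = PiR a b * (M k * PiS a b * (M k)ᴴ) * PiR a b := by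
            rw [hSS]; simp only [Matrix.mul_assoc]
    intro k
    have htr : ∑ k, ((PiR a b * M k * PiS a b) * (PiR a b * M k * PiS a b)ᴴ).trace = 0 := by
      rw [← Matrix.trace_sum, hsum, Matrix.trace_zero]
    have hnn : ∀ k ∈ Finset.univ,
        (0:ℂ) ≤ ((PiR a b * M k * PiS a b) * (PiR a b * M k * PiS a b)ᴴ).trace :=
      fun k _ => trace_mul_conjTranspose_self_nonneg _
    exact eq_zero_of_trace_mul_conjTranspose_self _
      ((Finset.sum_eq_zero_iff_of_nonneg hnn).mp htr k (Finset.mem_univ k))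
  have hPM : ∀ k, PiR a b * M k = PiR a b * M k * PiR a b := by
    intro k
    calc PiR a b * M k = PiR a b * M k * (PiS a b + PiR a b) := by
          rw [hSum, Matrix.mul_one]
      _ = PiR a b * M k * PiS a b + PiR a b * M k * PiR a b := by
          rw [Matrix.mul_add]
      _ = PiR a b * M k * PiR a b := by rw [h6 k, zero_add]
  have hMP : ∀ k, (M k)ᴴ * PiR a b = PiR a b * (M k)ᴴ * PiR a b := by
    intro k
    have h := congrArg Matrix.conjTranspose (hPM k)
    simpa [Matrix.conjTranspose_mul, hPH, Matrix.mul_assoc] using h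
  have key : ∀ X, PiR a b * T X * PiR a b = TR X := by
    intro X
    rw [hT, hTR]
    show PiR a b * (∑ k, M k * X * (M k)ᴴ) * PiR a b =
      (sandwichEnd (PiR a b)) ((krausEnd M) ((sandwichEnd (PiR a b)) X))
    show PiR a b * (∑ k, M k * X * (M k)ᴴ) * PiR a b =
      PiR a b * (∑ k, M k * (PiR a b * X * PiR a b) * (M k)ᴴ) * PiR a b
    simp only [Finset.mul_sum, Finset.sum_mul]
    refine Finset.sum_congr rfl fun k _ => ?_
    calc PiR a b * (M k * X * (M k)ᴴ) * PiR a b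
        = (PiR a b * M k) * X * ((M k)ᴴ * PiR a b) := by
          simp only [Matrix.mul_assoc]
      _ = (PiR a b * M k * PiR a b) * X * (PiR a b * (M k)ᴴ * PiR a b) := by
          rw [← hPM k, ← hMP k]
      _ = PiR a b * (M k * (PiR a b * X * PiR a b) * (M k)ᴴ) * PiR a b := by
          simp only [Matrix.mul_assoc]
  have TR_P : ∀ Y, TR (PiR a b * Y * PiR a b) = TR Y := by
    intro Y
    rw [hTR]
    show PiR a b * (∑ k, M k * (PiR a b * (PiR a b * Y * PiR a b) * PiR a b) * (M k)ᴴ) * PiR a b =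
      PiR a b * (∑ k, M k * (PiR a b * Y * PiR a b) * (M k)ᴴ) * PiR a b
    have hPYP : PiR a b * (PiR a b * Y * PiR a b) * PiR a b = PiR a b * Y * PiR a b := by
      calc PiR a b * (PiR a b * Y * PiR a b) * PiR a b
          = (PiR a b * PiR a b) * Y * (PiR a b * PiR a b) := by
            simp only [Matrix.mul_assoc]
        _ = PiR a b * Y * PiR a b := by rw [hPP]
    rw [hPYP]
  have iter : ∀ m : ℕ, PiR a b * T^[m] ρ * PiR a b =
      (TR ^ m) (PiR a b * ρ * PiR a b) := by
    intro m
    induction m with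
    | zero => simp
    | succ m ih =>
      rw [Function.iterate_succ_apply', pow_succ', Module.End.mul_apply,
        key (T^[m] ρ), ← TR_P (T^[m] ρ), ih]
  have htr : ∀ m : ℕ, (PiR a b * T^[m] ρ).trace =
      ((TR ^ m) (PiR a b * ρ * PiR a b)).trace := by
    intro m
    rw [← iter m, Matrix.trace_mul_cycle, hPP]
  have heq : (fun m : ℕ => (PiR a b * T^[m] ρ).trace) =
      fun m : ℕ => ((TR ^ m) (PiR a b * ρ * PiR a b)).trace := funext htr
  rw [heq]
  letI : NormedAddCommGroup (Matrix (Fin a ⊕ Fin b) (Fin a ⊕ Fin b) ℂ) :=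
    Matrix.normedAddCommGroup
  letI : NormedSpace ℂ (Matrix (Fin a ⊕ Fin b) (Fin a ⊕ Fin b) ℂ) :=
    Matrix.normedSpace
  have hlim := endPow_tendsto_zero TR hspec (PiR a b * ρ * PiR a b)
  have hcont : Continuous (Matrix.traceLinearMap (Fin a ⊕ Fin b) ℂ ℂ) :=
    LinearMap.continuous_of_finiteDimensional _
  have hfin := (hcont.tendsto 0).comp hlim
  rw [map_zero] at hfin
  exact hfin
end

section
/- Let T be a CPTP map with Kraus operators {M_k} on H = H_S ⊕ H_{T_1} ⊕ ... ⊕ H_{T_N}, such that in this block decomposition each M_k is block upper-Hessenberg of the DID form: the blocks from H_{T_i} to H_S and to H_{T_j} with j < i−1 are all zero, and for each i, ∩_k ker(M_{k,P_i}) = {0}, where M_{k,P_i} is the block mapping H_{T_i} to H_{T_{i−1}} (with H_{T_0} := H_S). Then no fixed point of T (as a density operator) has support intersecting ⊕_{i=1}^N H_{T_i}; in particular every fixed density operator is supported in H_S. -/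
open Matrix
open scoped ComplexOrder

/-- Index type for the DID chain `H = H_S ⊕ H_{T_1} ⊕ ... ⊕ H_{T_N}`
(position `0` is `H_S`). -/
abbrev CIdx {N : ℕ} (ds : Fin (N + 1) → ℕ) := Σ i : Fin (N + 1), Fin (ds i)

/-- The orthogonal projection onto the `j`-th subspace of the chain. -/
noncomputable def PTj {N : ℕ} (ds : Fin (N + 1) → ℕ) (j : Fin (N + 1)) :
    Matrix (CIdx ds) (CIdx ds) ℂ :=
  Matrix.diagonal (fun x => if x.1 = j then (1 : ℂ) else 0)

/-- The coupling block `M_{k,P_i} : H_{T_i} → H_{T_{i-1}}` (with `H_{T_0} = H_S`). -/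
noncomputable def Pblk {N K : ℕ} {ds : Fin (N + 1) → ℕ}
    (M : Fin K → Matrix (CIdx ds) (CIdx ds) ℂ) (k : Fin K) (i : Fin N) :
    Matrix (Fin (ds i.castSucc)) (Fin (ds i.succ)) ℂ :=
  Matrix.of fun p q => M k ⟨i.castSucc, p⟩ ⟨i.succ, q⟩

/- ### Auxiliary lemmas -/

/-- A positive semidefinite matrix with vanishing diagonal entry has vanishing row. -/
lemma psd_row_eq_zero {m : Type*} [Fintype m] [DecidableEq m]
    {ρ : Matrix m m ℂ} (hρ : ρ.PosSemidef) {x : m} (h : ρ x x = 0) (y : m) :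
    ρ x y = 0 := by
  obtain ⟨B, hB⟩ : ∃ B : Matrix m m ℂ, ρ = Bᴴ * B := by
    open scoped MatrixOrder in
    obtain ⟨B, hB⟩ := CStarAlgebra.nonneg_iff_eq_star_mul_self.mp hρ.nonneg
    exact ⟨B, hB⟩
  have hx : ∑ c, star (B c x) * B c x = 0 := by
    have h2 : ρ x x = ∑ c, star (B c x) * B c x := by
      rw [hB, Matrix.mul_apply]
      exact Finset.sum_congr rfl fun c _ => by rw [Matrix.conjTranspose_apply]
    rw [← h2, h]
  have hcol : ∀ c, B c x = 0 := by
    intro c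
    have h0 := (Finset.sum_eq_zero_iff_of_nonneg
      (fun c _ => star_mul_self_nonneg (B c x))).mp hx c (Finset.mem_univ c)
    exact (CStarRing.star_mul_self_eq_zero_iff (B c x)).mp h0
  rw [hB, Matrix.mul_apply]
  refine Finset.sum_eq_zero fun c _ => ?_
  rw [Matrix.conjTranspose_apply, hcol c, star_zero, zero_mul]

lemma psd_diag_nonneg {m : Type*} [Fintype m] [DecidableEq m]
    {τ : Matrix m m ℂ} (hτ : τ.PosSemidef) (q : m) : 0 ≤ τ q q := by
  have := hτ.dotProduct_mulVec_nonneg (Pi.single q 1)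
  simpa [Matrix.mulVec, dotProduct, Pi.single_apply, Finset.mul_sum] using this

lemma psd_trace_nonneg {m : Type*} [Fintype m] [DecidableEq m]
    {τ : Matrix m m ℂ} (hτ : τ.PosSemidef) : 0 ≤ τ.trace :=
  Finset.sum_nonneg fun q _ => psd_diag_nonneg hτ q

lemma psd_trace_zero {m : Type*} [Fintype m] [DecidableEq m]
    {τ : Matrix m m ℂ} (hτ : τ.PosSemidef) (h : τ.trace = 0) : τ = 0 := by
  have hdiag : ∀ q, τ q q = 0 :=
    fun q => (Finset.sum_eq_zero_iff_of_nonneg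
      (fun q _ => psd_diag_nonneg hτ q)).mp h q (Finset.mem_univ q)
  ext a b
  exact psd_row_eq_zero hτ (hdiag a) b

lemma mul_psd_mul_conjTranspose_eq_zero {l m : Type*} [Fintype l] [Fintype m] [DecidableEq m]
    {σ : Matrix m m ℂ} (hσ : σ.PosSemidef) {A : Matrix l m ℂ}
    (h : A * σ * Aᴴ = 0) : A * σ = 0 := by
  obtain ⟨B, rfl⟩ : ∃ B : Matrix m m ℂ, σ = Bᴴ * B := by
    open scoped MatrixOrder in
    obtain ⟨B, hB⟩ := CStarAlgebra.nonneg_iff_eq_star_mul_self.mp hσ.nonneg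
    exact ⟨B, hB⟩
  have h2 : (A * Bᴴ) * (A * Bᴴ)ᴴ = 0 := by
    have : A * (Bᴴ * B) * Aᴴ = (A * Bᴴ) * (Bᴴᴴ * Aᴴ) := by
      simp only [Matrix.mul_assoc, Matrix.conjTranspose_conjTranspose]
    rw [Matrix.conjTranspose_mul, ← this, h]
  have hz : A * Bᴴ = 0 := Matrix.self_mul_conjTranspose_eq_zero.mp h2
  calc A * (Bᴴ * B) = (A * Bᴴ) * B := (Matrix.mul_assoc _ _ _).symm
    _ = 0 := by rw [hz, Matrix.zero_mul]

/-- Collapse a sum over the chain index type to a single block. -/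
lemma sumCollapse {N : ℕ} {ds : Fin (N + 1) → ℕ} (f : CIdx ds → ℂ) (j : Fin (N + 1))
    (h : ∀ c : CIdx ds, c.1 ≠ j → f c = 0) :
    ∑ c, f c = ∑ c2 : Fin (ds j), f ⟨j, c2⟩ := by
  rw [← Finset.univ_sigma_univ, Finset.sum_sigma]
  exact Finset.sum_eq_single j
    (fun b _ hb => Finset.sum_eq_zero fun c2 _ => h ⟨b, c2⟩ hb)
    (fun h' => absurd (Finset.mem_univ j) h')

/-- Key structural lemma: the rows of any fixed point in a nonzero block vanish. -/
lemma did_rows_zero {N K : ℕ} {ds : Fin (N + 1) → ℕ}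
    (M : Fin K → Matrix (CIdx ds) (CIdx ds) ℂ)
    (hTP : ∑ k, (M k)ᴴ * M k = 1)
    (hDID : ∀ k, ∀ x y : CIdx ds,
      ((x.1 : ℕ) + 1 < (y.1 : ℕ) ∨ (0 < (x.1 : ℕ) ∧ (y.1 : ℕ) = 0)) → M k x y = 0)
    (hker : ∀ i : Fin N, ∀ v : Fin (ds i.succ) → ℂ,
      (∀ k, (Pblk M k i).mulVec v = 0) → v = 0)
    (ρ : Matrix (CIdx ds) (CIdx ds) ℂ) (hρ : ρ.PosSemidef)
    (hfix : (∑ k, M k * ρ * (M k)ᴴ) = ρ) :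
    ∀ x y : CIdx ds, (x.1 : ℕ) ≠ 0 → ρ x y = 0 := by
  suffices H : ∀ n : ℕ, ∀ x y : CIdx ds, (x.1 : ℕ) = n → (x.1 : ℕ) ≠ 0 → ρ x y = 0 by
    intro x y hx; exact H (x.1 : ℕ) x y rfl hx
  intro n
  induction n using Nat.strong_induction_on with
  | _ n IH =>
  intro x y hxn hx0
  have IHrow : ∀ c e : CIdx ds, 0 < (c.1 : ℕ) → (c.1 : ℕ) < n → ρ c e = 0 :=
    fun c e h1 h2 => IH _ h2 c e rfl h1.ne'
  have IHcol : ∀ c e : CIdx ds, 0 < (e.1 : ℕ) → (e.1 : ℕ) < n → ρ c e = 0 := by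
    intro c e h1 h2
    rw [← hρ.1.apply c e, IHrow e c h1 h2, star_zero]
  obtain ⟨x1, p⟩ := x
  simp only at hxn hx0
  have hn0 : 0 < n := Nat.pos_of_ne_zero (by omega)
  have hnN : n ≤ N := by have := x1.isLt; omega
  obtain ⟨i, hisucc, hicast⟩ : ∃ i : Fin N,
      ((i.succ : Fin (N + 1)) : ℕ) = n ∧ ((i.castSucc : Fin (N + 1)) : ℕ) = n - 1 :=
    ⟨⟨n - 1, by omega⟩, by simp; omega, by simp⟩
  have hx1 : x1 = i.succ := Fin.ext (by omega)
  subst hx1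
  -- the weight and the two key matrices
  set w : CIdx ds → ℂ := fun c => if (c.1 : ℕ) < n then 1 else 0 with hw
  set Wm : Matrix (CIdx ds) (CIdx ds) ℂ := Matrix.diagonal w with hWm
  set Gm : Matrix (CIdx ds) (CIdx ds) ℂ := ∑ k, (M k)ᴴ * Wm * M k with hGm
  have htrace : Matrix.trace (Wm * ρ) = Matrix.trace (Gm * ρ) := by
    conv_lhs => rw [← hfix]
    rw [Matrix.mul_sum, Matrix.trace_sum, hGm, Matrix.sum_mul, Matrix.trace_sum]
    refine Finset.sum_congr rfl fun k _ => ?_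
    rw [show Wm * (M k * ρ * (M k)ᴴ) = (Wm * (M k * ρ)) * (M k)ᴴ by
      simp only [Matrix.mul_assoc], Matrix.trace_mul_comm]
    simp only [Matrix.mul_assoc]
  have hWtr : Matrix.trace (Wm * ρ) = ∑ z, w z * ρ z z := by
    simp [Matrix.trace, Matrix.diag, hWm, Matrix.diagonal_mul]
  have hGent : ∀ c d : CIdx ds, Gm c d = ∑ k, ∑ z, star (M k z c) * (w z * M k z d) := by
    intro c d
    rw [hGm, Matrix.sum_apply]
    refine Finset.sum_congr rfl fun k _ => ?_
    rw [Matrix.mul_assoc, Matrix.mul_apply]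
    refine Finset.sum_congr rfl fun z _ => ?_
    rw [Matrix.conjTranspose_apply, hWm, Matrix.diagonal_mul]
  have hTPent : ∀ c d : CIdx ds,
      ∑ k, ∑ z, star (M k z c) * M k z d = if c = d then 1 else 0 := by
    intro c d
    calc ∑ k, ∑ z, star (M k z c) * M k z d
        = (∑ k, (M k)ᴴ * M k) c d := by
          rw [Matrix.sum_apply]
          exact Finset.sum_congr rfl fun k _ => by
            rw [Matrix.mul_apply]
            exact Finset.sum_congr rfl fun z _ => by rw [Matrix.conjTranspose_apply]
      _ = (1 : Matrix (CIdx ds) (CIdx ds) ℂ) c d := by rw [hTP]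
      _ = if c = d then 1 else 0 := Matrix.one_apply
  have hG0 : ∀ c d : CIdx ds, ((c.1 : ℕ) = 0 ∨ (d.1 : ℕ) = 0) →
      Gm c d = if c = d then 1 else 0 := by
    intro c d hcd
    rw [hGent, ← hTPent c d]
    refine Finset.sum_congr rfl fun k _ => Finset.sum_congr rfl fun z _ => ?_
    by_cases hz : (z.1 : ℕ) < n
    · simp [hw, hz]
    · rcases hcd with h | h
      · rw [hDID k z c (Or.inr ⟨by omega, h⟩)]; simp
      · rw [hDID k z d (Or.inr ⟨by omega, h⟩)]; simp [hw, hz]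
  have hGbig : ∀ c d : CIdx ds, n < (c.1 : ℕ) → Gm c d = 0 := by
    intro c d hc
    rw [hGent]
    refine Finset.sum_eq_zero fun k _ => Finset.sum_eq_zero fun z _ => ?_
    by_cases hz : (z.1 : ℕ) < n
    · rw [hDID k z c (Or.inl (by omega))]; simp
    · simp [hw, hz]
  have hGbig' : ∀ c d : CIdx ds, n < (d.1 : ℕ) → Gm c d = 0 := by
    intro c d hd
    rw [hGent]
    refine Finset.sum_eq_zero fun k _ => Finset.sum_eq_zero fun z _ => ?_
    by_cases hz : (z.1 : ℕ) < n
    · rw [hDID k z d (Or.inl (by omega))]; simp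
    · simp [hw, hz]
  have hGtr : Matrix.trace (Gm * ρ) = ∑ c, ∑ d, Gm c d * ρ d c := by
    simp [Matrix.trace, Matrix.diag, Matrix.mul_apply]
  have hdecomp : ∀ c d : CIdx ds, Gm c d * ρ d c =
      (if c = d ∧ (c.1 : ℕ) = 0 then ρ c c else 0)
      + (if (c.1 : ℕ) = n ∧ (d.1 : ℕ) = n then Gm c d * ρ d c else 0) := by
    intro c d
    by_cases hc0 : (c.1 : ℕ) = 0
    · rw [hG0 c d (Or.inl hc0)]
      by_cases hcd : c = d
      · subst hcd; simp [hc0, hn0.ne, hn0.ne']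
      · simp [hcd, hc0, hn0.ne, hn0.ne']
    · by_cases hd0 : (d.1 : ℕ) = 0
      · rw [hG0 c d (Or.inr hd0)]
        have hcd : c ≠ d := fun h => hc0 (h ▸ hd0)
        simp [hcd, hd0, hn0.ne, hn0.ne']
      · by_cases hcn : (c.1 : ℕ) = n
        · by_cases hdn : (d.1 : ℕ) = n
          · simp [hcn, hdn, hc0, hn0.ne, hn0.ne']
          · rcases lt_or_gt_of_ne hdn with h | h
            · rw [IHrow d c (by omega) h]; simp [hc0, hdn]
            · rw [hGbig' c d h]; simp [hc0, hdn]
        · rcases lt_or_gt_of_ne hcn with h | h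
          · rw [IHcol d c (by omega) h]; simp [hc0, hcn]
          · rw [hGbig c d h]; simp [hc0, hcn]
  have hWval : ∑ z, w z * ρ z z = ∑ z, if (z.1 : ℕ) = 0 then ρ z z else 0 := by
    refine Finset.sum_congr rfl fun z _ => ?_
    by_cases hz : (z.1 : ℕ) = 0
    · simp [hw, hz, hn0]
    · by_cases hz2 : (z.1 : ℕ) < n
      · rw [IHrow z z (by omega) hz2]; simp
      · simp [hw, hz2, hz]
  have hS : (∑ c : CIdx ds, ∑ d : CIdx ds,
      if (c.1 : ℕ) = n ∧ (d.1 : ℕ) = n then Gm c d * ρ d c else 0) = 0 := by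
    have e1 : Matrix.trace (Gm * ρ)
        = (∑ c : CIdx ds, if (c.1 : ℕ) = 0 then ρ c c else 0)
          + (∑ c : CIdx ds, ∑ d : CIdx ds,
              if (c.1 : ℕ) = n ∧ (d.1 : ℕ) = n then Gm c d * ρ d c else 0) := by
      rw [hGtr]
      rw [show (∑ c : CIdx ds, ∑ d : CIdx ds, Gm c d * ρ d c)
          = ∑ c : CIdx ds, ∑ d : CIdx ds,
              ((if c = d ∧ (c.1 : ℕ) = 0 then ρ c c else 0)
               + (if (c.1 : ℕ) = n ∧ (d.1 : ℕ) = n then Gm c d * ρ d c else 0)) from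
        Finset.sum_congr rfl fun c _ => Finset.sum_congr rfl fun d _ => hdecomp c d]
      simp only [Finset.sum_add_distrib]
      congr 1
      refine Finset.sum_congr rfl fun c _ => ?_
      by_cases hc : (c.1 : ℕ) = 0
      · simp [hc]
      · simp [hc]
    have e2 : Matrix.trace (Gm * ρ)
        = ∑ c : CIdx ds, if (c.1 : ℕ) = 0 then ρ c c else 0 := by
      rw [← htrace, hWtr, hWval]
    have := e2.symm.trans e1
    exact (left_eq_add.mp this)
  -- collapse to the block (i.succ, i.succ)
  have hcond : ∀ c : CIdx ds, ((c.1 : ℕ) = n ↔ c.1 = (i.succ : Fin (N + 1))) := by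
    intro c
    constructor
    · intro h; exact Fin.ext (by rw [h, hisucc])
    · intro h; rw [h, hisucc]
  set σ : Matrix (Fin (ds i.succ)) (Fin (ds i.succ)) ℂ :=
    ρ.submatrix (fun q => (⟨i.succ, q⟩ : CIdx ds)) (fun q => ⟨i.succ, q⟩) with hσ
  have hσpsd : σ.PosSemidef := hρ.submatrix _
  set A : Fin K → Matrix (Fin (ds i.castSucc)) (Fin (ds i.succ)) ℂ :=
    fun k => Pblk M k i with hA
  have hSblk : (∑ c : CIdx ds, ∑ d : CIdx ds,
      if (c.1 : ℕ) = n ∧ (d.1 : ℕ) = n then Gm c d * ρ d c else 0)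
      = ∑ c2 : Fin (ds i.succ), ∑ d2 : Fin (ds i.succ),
          Gm ⟨i.succ, c2⟩ ⟨i.succ, d2⟩ * σ d2 c2 := by
    rw [sumCollapse _ i.succ (fun c hc => Finset.sum_eq_zero fun d _ =>
      if_neg (fun hpair => hc ((hcond c).mp hpair.1)))]
    refine Finset.sum_congr rfl fun c2 _ => ?_
    rw [sumCollapse _ i.succ (fun d hd =>
      if_neg (fun hpair => hd ((hcond d).mp hpair.2)))]
    refine Finset.sum_congr rfl fun d2 _ => ?_
    rw [if_pos ⟨hisucc, hisucc⟩]
    rfl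
  have hGblk : ∀ c2 d2 : Fin (ds i.succ),
      Gm ⟨i.succ, c2⟩ ⟨i.succ, d2⟩ = ∑ k, ((A k)ᴴ * A k) c2 d2 := by
    intro c2 d2
    rw [hGent]
    refine Finset.sum_congr rfl fun k _ => ?_
    rw [sumCollapse _ i.castSucc ?_]
    · rw [Matrix.mul_apply]
      refine Finset.sum_congr rfl fun q _ => ?_
      rw [Matrix.conjTranspose_apply]
      have hwp : w ⟨i.castSucc, q⟩ = 1 := if_pos (by rw [hicast]; omega)
      rw [hwp, one_mul]
      rfl
    · intro z hz
      by_cases hzn : (z.1 : ℕ) < n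
      · have hne : (z.1 : ℕ) ≠ n - 1 := fun h => hz (Fin.ext (by rw [h, hicast]))
        rw [hDID k z ⟨i.succ, c2⟩ (Or.inl (by rw [hisucc]; omega))]
        simp
      · have hwz : w z = 0 := if_neg hzn
        rw [hwz]; simp
  -- conclude σ = 0
  have htrσ : Matrix.trace ((∑ k, (A k)ᴴ * A k) * σ) = 0 := by
    have h1 : Matrix.trace ((∑ k, (A k)ᴴ * A k) * σ)
        = ∑ c2 : Fin (ds i.succ), ∑ d2 : Fin (ds i.succ),
            Gm ⟨i.succ, c2⟩ ⟨i.succ, d2⟩ * σ d2 c2 := by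
      simp only [Matrix.trace, Matrix.diag, Matrix.mul_apply]
      refine Finset.sum_congr rfl fun c2 _ => Finset.sum_congr rfl fun d2 _ => ?_
      rw [hGblk c2 d2, Matrix.sum_apply]
    rw [h1, ← hSblk, hS]
  have htr_each : ∀ k, Matrix.trace (A k * σ * (A k)ᴴ) = 0 := by
    have hsum : ∑ k, Matrix.trace (A k * σ * (A k)ᴴ) = 0 := by
      rw [← htrσ, Matrix.sum_mul, Matrix.trace_sum]
      refine Finset.sum_congr rfl fun k _ => ?_
      rw [Matrix.trace_mul_cycle]
    intro k
    exact (Finset.sum_eq_zero_iff_of_nonneg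
      (fun k _ => psd_trace_nonneg (hσpsd.mul_mul_conjTranspose_same (A k)))).mp
      hsum k (Finset.mem_univ k)
  have hAσ : ∀ k, A k * σ = 0 := fun k =>
    mul_psd_mul_conjTranspose_eq_zero hσpsd
      (psd_trace_zero (hσpsd.mul_mul_conjTranspose_same (A k)) (htr_each k))
  have hσ0 : σ = 0 := by
    ext q q'
    have hcol : (fun q => σ q q') = 0 := by
      refine hker i (fun q => σ q q') fun k => ?_
      funext pp
      have := congrFun (congrFun (hAσ k) pp) q'
      simpa [Matrix.mul_apply, Matrix.mulVec, dotProduct] using this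
    exact congrFun hcol q
  have hdiagzero : ρ ⟨i.succ, p⟩ ⟨i.succ, p⟩ = 0 := by
    have := congrFun (congrFun hσ0 p) p
    simpa [hσ] using this
  exact psd_row_eq_zero hρ hdiagzero y

/-- If the Kraus operators of a CPTP map have the (successful) DID block structure —
the blocks from `H_{T_i}` to `H_S` and to `H_{T_j}` with `j < i - 1` vanish, and the
coupling blocks `M_{k,P_i}` have trivial joint kernel — then every fixed density
operator is supported in `H_S`. -/
theorem stmt_15 {N K : ℕ} {ds : Fin (N + 1) → ℕ}
    (M : Fin K → Matrix (CIdx ds) (CIdx ds) ℂ)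
    (hTP : ∑ k, (M k)ᴴ * M k = 1)
    (hDID : ∀ k, ∀ x y : CIdx ds,
      ((x.1 : ℕ) + 1 < (y.1 : ℕ) ∨ (0 < (x.1 : ℕ) ∧ (y.1 : ℕ) = 0)) → M k x y = 0)
    (hker : ∀ i : Fin N, ∀ v : Fin (ds i.succ) → ℂ,
      (∀ k, (Pblk M k i).mulVec v = 0) → v = 0) :
    ∀ ρ : Matrix (CIdx ds) (CIdx ds) ℂ, ρ.PosSemidef → ρ.trace = 1 →
      (∑ k, M k * ρ * (M k)ᴴ) = ρ →
      msupp ρ ≤ LinearMap.range (Matrix.toEuclideanLin (PTj ds 0)) := by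
  intro ρ hρ htr hfix
  have hrows := did_rows_zero M hTP hDID hker ρ hρ hfix
  have hcols : ∀ x y : CIdx ds, (y.1 : ℕ) ≠ 0 → ρ x y = 0 := by
    intro x y hy
    rw [← hρ.1.apply x y, hrows y x hy, star_zero]
  intro v hv
  have hvz : ∀ x : CIdx ds, x.1 ≠ 0 → v x = 0 := by
    intro x hx
    have hxv : (x.1 : ℕ) ≠ 0 := fun h => hx (Fin.ext h)
    have hcolzero : ρ *ᵥ Pi.single x (1 : ℂ) = 0 := by
      rw [Matrix.mulVec_single]
      funext z
      simp only [MulOpposite.op_one, one_smul, Matrix.col_apply, Pi.zero_apply]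
      exact hcols z x hxv
    have hmem : (EuclideanSpace.single x (1 : ℂ)) ∈
        LinearMap.ker (Matrix.toEuclideanLin ρ) := by
      rw [LinearMap.mem_ker]
      rw [show (EuclideanSpace.single x (1 : ℂ))
            = WithLp.toLp 2 (Pi.single x 1) from rfl,
          Matrix.toEuclideanLin_apply_piLp_toLp, hcolzero]
      rfl
    have := (Submodule.mem_orthogonal _ v).mp hv _ hmem
    simpa [EuclideanSpace.inner_single_left] using this
  refine ⟨v, ?_⟩
  rw [Matrix.toEuclideanLin_apply]
  have hfixv : (PTj ds 0) *ᵥ ((WithLp.equiv 2 ((CIdx ds) → ℂ)) v)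
      = (WithLp.equiv 2 ((CIdx ds) → ℂ)) v := by
    funext z
    rw [PTj, Matrix.mulVec_diagonal]
    by_cases hz : z.1 = 0
    · rw [if_pos hz, one_mul]
    · rw [if_neg hz, zero_mul]
      exact (hvz z hz).symm
  exact congrArg (WithLp.toLp 2) hfixv
end

section
/- Let T be a CPTP map with Kraus operators {M_k}, and H = H_S ⊕ H_{T_1} ⊕ ... ⊕ H_{T_N} with the DID block structure (each M_k block upper triangular with only nearest-neighbor upward couplings M_{k,P_i} from H_{T_i} to H_{T_{i−1}}). Let ρ be a density operator with Π_{T_i} ρ Π_{T_i} = ρ for some i ≥ 1, where H_{T_0} := H_S. Then γ_i Tr(ρ) ≤ Tr(Π_{T_{i−1}} T(ρ)) ≤ Γ_i Tr(ρ), where γ_i and Γ_i are respectively the smallest and the largest eigenvalue of Σ_k M_{k,P_i}† M_{k,P_i}. -/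
open Matrix
open scoped ComplexOrder

lemma sum_block' {N : ℕ} {ds : Fin (N+1) → ℕ} (s : Fin (N+1)) (g : CIdx ds → ℂ)
    (hg : ∀ y, y.1 ≠ s → g y = 0) :
    ∑ y, g y = ∑ q : Fin (ds s), g ⟨s, q⟩ := by
  rw [← Finset.univ_sigma_univ, Finset.sum_sigma]
  rw [Finset.sum_eq_single s]
  · intro j _ hj
    exact Finset.sum_eq_zero fun p _ => hg ⟨j, p⟩ hj
  · intro h; exact absurd (Finset.mem_univ s) h

lemma aux_bounds' {n : Type*} [Fintype n] [DecidableEq n] {A : Matrix n n ℂ} (hA : A.IsHermitian)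
    {σ : Matrix n n ℂ} (hσ : σ.PosSemidef) :
    (⨅ j, hA.eigenvalues j) * σ.trace.re ≤ (A * σ).trace.re ∧
    (A * σ).trace.re ≤ (⨆ j, hA.eigenvalues j) * σ.trace.re := by
  classical
  cases isEmpty_or_nonempty n with
  | inl h =>
    simp [Matrix.trace, Real.iInf_of_isEmpty, Real.iSup_of_isEmpty]
  | inr h =>
    obtain ⟨U, hUs, hspec⟩ : ∃ U : Matrix n n ℂ, U * star U = 1 ∧
        A = U * Matrix.diagonal (RCLike.ofReal ∘ hA.eigenvalues) * star U :=
      ⟨_, (Matrix.mem_unitaryGroup_iff).mp hA.eigenvectorUnitary.2, hA.spectral_theorem⟩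
    set τ : Matrix n n ℂ := star U * σ * U with hτ
    have hτps : τ.PosSemidef := by
      rw [hτ, Matrix.star_eq_conjTranspose]
      exact hσ.conjTranspose_mul_mul_same U
    clear_value τ
    have hτtr : τ.trace = σ.trace := by
      rw [hτ, Matrix.trace_mul_cycle, hUs, Matrix.one_mul]
    have key : (A * σ).trace = (Matrix.diagonal (RCLike.ofReal ∘ hA.eigenvalues) * τ).trace := by
      rw [hτ]
      conv_lhs => rw [hspec]
      rw [Matrix.mul_assoc]
      rw [Matrix.mul_assoc]
      rw [Matrix.trace_mul_comm]
      rw [Matrix.mul_assoc]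
    have hDτ : (Matrix.diagonal (RCLike.ofReal ∘ hA.eigenvalues) * τ).trace
        = ∑ j, (hA.eigenvalues j : ℂ) * τ j j := by
      simp [Matrix.trace, Matrix.diag, Matrix.diagonal_mul]
    have hre : (A * σ).trace.re = ∑ j, hA.eigenvalues j * (τ j j).re := by
      rw [key, hDτ, Complex.re_sum]
      exact Finset.sum_congr rfl fun j _ => Complex.re_ofReal_mul _ _
    have hd : ∀ j, 0 ≤ (τ j j).re := by
      intro j
      have h0 : (0 : ℂ) ≤ τ j j := by
        exact hτps.diag_nonneg
      exact (Complex.le_def.mp h0).1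
    have htr : σ.trace.re = ∑ j, (τ j j).re := by
      rw [← hτtr]; simp [Matrix.trace, Matrix.diag, Complex.re_sum]
    constructor
    · rw [hre, htr, Finset.mul_sum]
      refine Finset.sum_le_sum fun j _ => mul_le_mul_of_nonneg_right ?_ (hd j)
      exact ciInf_le (Set.Finite.bddBelow (Set.finite_range _)) j
    · rw [hre, htr, Finset.mul_sum]
      refine Finset.sum_le_sum fun j _ => mul_le_mul_of_nonneg_right ?_ (hd j)
      exact le_ciSup (Set.Finite.bddAbove (Set.finite_range _)) j

/-- Transition-rate bounds for the DID: if `ρ` is a density operator supported on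
`H_{T_i}`, then `γ_i Tr(ρ) ≤ Tr(Π_{T_{i-1}} T(ρ)) ≤ Γ_i Tr(ρ)`, where `γ_i` (resp.
`Γ_i`) is the least (resp. largest) eigenvalue of `Σ_k M_{k,P_i}† M_{k,P_i}`. -/
theorem stmt_16 {N K : ℕ} {ds : Fin (N + 1) → ℕ}
    (M : Fin K → Matrix (CIdx ds) (CIdx ds) ℂ)
    (hTP : ∑ k, (M k)ᴴ * M k = 1)
    (hDID : ∀ k, ∀ x y : CIdx ds,
      ((x.1 : ℕ) + 1 < (y.1 : ℕ) ∨ (0 < (x.1 : ℕ) ∧ (y.1 : ℕ) = 0)) → M k x y = 0)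
    (i : Fin N)
    (hA : (∑ k, (Pblk M k i)ᴴ * Pblk M k i).IsHermitian)
    (ρ : Matrix (CIdx ds) (CIdx ds) ℂ)
    (hρ : ρ.PosSemidef) (hρtr : ρ.trace = 1)
    (hρsupp : PTj ds i.succ * ρ * PTj ds i.succ = ρ) :
    (⨅ j, hA.eigenvalues j) * ρ.trace.re ≤
        (PTj ds i.castSucc * ∑ k, M k * ρ * (M k)ᴴ).trace.re ∧
      (PTj ds i.castSucc * ∑ k, M k * ρ * (M k)ᴴ).trace.re ≤
        (⨆ j, hA.eigenvalues j) * ρ.trace.re := by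
  classical
  set e : Fin (ds i.succ) → CIdx ds := fun q => ⟨i.succ, q⟩ with he
  have hρ0 : ∀ x y : CIdx ds, (x.1 ≠ i.succ ∨ y.1 ≠ i.succ) → ρ x y = 0 := by
    intro x y hxy
    rw [← hρsupp, PTj, Matrix.mul_diagonal, Matrix.diagonal_mul]
    rcases hxy with hx | hy
    · rw [if_neg hx]; ring
    · rw [if_neg hy]; ring
  have htrρ : ρ.trace = (ρ.submatrix e e).trace := by
    have := sum_block' (ds := ds) i.succ (fun y => ρ y y) (fun y hy => hρ0 y y (Or.inl hy))
    simpa [Matrix.trace, Matrix.diag, Matrix.submatrix_apply, he] using this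
  have hvan_z : ∀ (k : Fin K) (x z : CIdx ds), z.1 ≠ i.succ →
      (M k * ρ) x z * (M k)ᴴ z x = 0 := by
    intro k x z hz
    have h0 : (M k * ρ) x z = 0 := by
      rw [Matrix.mul_apply]
      exact Finset.sum_eq_zero fun y _ => by rw [hρ0 y z (Or.inr hz), mul_zero]
    rw [h0, zero_mul]
  have hentry : ∀ (k : Fin K) (x : CIdx ds), (M k * ρ * (M k)ᴴ) x x
      = ∑ r : Fin (ds i.succ), ∑ q : Fin (ds i.succ),
          M k x ⟨i.succ, q⟩ * ρ ⟨i.succ, q⟩ ⟨i.succ, r⟩ * star (M k x ⟨i.succ, r⟩) := by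
    intro k x
    rw [Matrix.mul_apply,
      sum_block' i.succ (fun z => (M k * ρ) x z * (M k)ᴴ z x) (fun z hz => hvan_z k x z hz)]
    refine Finset.sum_congr rfl fun r _ => ?_
    rw [Matrix.mul_apply,
      sum_block' i.succ (fun y => M k x y * ρ y ⟨i.succ, r⟩)
        (fun y hy => by
          show M k x y * ρ y ⟨i.succ, r⟩ = 0
          rw [hρ0 y ⟨i.succ, r⟩ (Or.inl hy), mul_zero]),
      Finset.sum_mul]
    exact Finset.sum_congr rfl fun q _ => by rw [Matrix.conjTranspose_apply]
  have hLHS : (PTj ds i.castSucc * ∑ k, M k * ρ * (M k)ᴴ).trace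
      = ∑ k, ∑ p : Fin (ds i.castSucc),
          (M k * ρ * (M k)ᴴ) ⟨i.castSucc, p⟩ ⟨i.castSucc, p⟩ := by
    have h1 : (PTj ds i.castSucc * ∑ k, M k * ρ * (M k)ᴴ).trace
        = ∑ x : CIdx ds, (if x.1 = i.castSucc then (1:ℂ) else 0)
            * (∑ k, M k * ρ * (M k)ᴴ) x x := by
      simp [Matrix.trace, Matrix.diag, PTj, Matrix.diagonal_mul]
    rw [h1, sum_block' i.castSucc _ (fun x hx => by rw [if_neg hx, zero_mul])]
    simp only [eq_self_iff_true, if_true, one_mul, Matrix.sum_apply]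
    exact Finset.sum_comm
  have hRHS : ((∑ k, (Pblk M k i)ᴴ * Pblk M k i) * ρ.submatrix e e).trace
      = ∑ k, ∑ p : Fin (ds i.castSucc),
          (M k * ρ * (M k)ᴴ) ⟨i.castSucc, p⟩ ⟨i.castSucc, p⟩ := by
    rw [Finset.sum_mul, Matrix.trace_sum]
    refine Finset.sum_congr rfl fun k _ => ?_
    rw [Matrix.mul_assoc, Matrix.trace_mul_comm]
    have : ∀ p : Fin (ds i.castSucc),
        (Pblk M k i * ρ.submatrix e e * (Pblk M k i)ᴴ) p p
          = (M k * ρ * (M k)ᴴ) ⟨i.castSucc, p⟩ ⟨i.castSucc, p⟩ := by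
      intro p
      rw [hentry k ⟨i.castSucc, p⟩, Matrix.mul_apply]
      refine Finset.sum_congr rfl fun r _ => ?_
      rw [Matrix.mul_apply, Finset.sum_mul]
      refine Finset.sum_congr rfl fun q _ => ?_
      rw [Matrix.conjTranspose_apply]
      rfl
    simp only [Matrix.trace, Matrix.diag, this]
  have key : (PTj ds i.castSucc * ∑ k, M k * ρ * (M k)ᴴ).trace
      = ((∑ k, (Pblk M k i)ᴴ * Pblk M k i) * ρ.submatrix e e).trace := by
    rw [hLHS, hRHS]
  obtain ⟨h1, h2⟩ := aux_bounds' hA (hρ.submatrix e)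
  have hre := congrArg Complex.re key
  have htre := congrArg Complex.re htrρ
  exact ⟨by rw [hre, htre]; exact h1, by rw [hre, htre]; exact h2⟩
end

section
/- Let T be a CPTP map on a finite-dimensional Hilbert space H and H_S an invariant subspace with projection Π_S. If supp((T*)^{n+1}(Π_S)) = supp((T*)^n(Π_S)) ≠ H for some n, i.e., the increasing sequence of supports stabilizes before covering all of H, then H_S is not globally asymptotically stable. -/
open Matrix Filter Topology
open scoped ComplexOrder

lemma aux_sum_mulVec {d K : ℕ} (A : Fin K → Matrix (Fin d) (Fin d) ℂ) (v : Fin d → ℂ) :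
    (∑ k, A k) *ᵥ v = ∑ k, (A k) *ᵥ v := by
  ext i
  simp only [mulVec, dotProduct, Matrix.sum_apply, Finset.sum_mul, Finset.sum_apply]
  exact Finset.sum_comm

lemma aux_dotProduct_sum {d K : ℕ} (v : Fin d → ℂ) (w : Fin K → (Fin d → ℂ)) :
    v ⬝ᵥ (∑ k, w k) = ∑ k, v ⬝ᵥ w k := by
  simp only [dotProduct, Finset.sum_apply, Finset.mul_sum]
  exact Finset.sum_comm

lemma aux_psd_sum {d K : ℕ} (M : Fin K → Matrix (Fin d) (Fin d) ℂ)
    {A : Matrix (Fin d) (Fin d) ℂ} (hA : A.PosSemidef) :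
    (∑ k, (M k)ᴴ * A * M k).PosSemidef :=
  Finset.sum_induction (fun k => (M k)ᴴ * A * M k) (fun B => B.PosSemidef)
    (fun _ _ ha hb => ha.add hb) Matrix.PosSemidef.zero
    (fun k _ => hA.conjTranspose_mul_mul_same (M k))

lemma aux_key {d K : ℕ} (M : Fin K → Matrix (Fin d) (Fin d) ℂ)
    {A : Matrix (Fin d) (Fin d) ℂ} (hA : A.PosSemidef) (v : Fin d → ℂ)
    (hv : (∑ k, (M k)ᴴ * A * M k) *ᵥ v = 0) (k : Fin K) :
    A *ᵥ (M k *ᵥ v) = 0 := by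
  have h0 : ∑ j, star (M j *ᵥ v) ⬝ᵥ (A *ᵥ (M j *ᵥ v)) = 0 := by
    have h := congrArg (fun w => star v ⬝ᵥ w) hv
    simp only [aux_sum_mulVec, aux_dotProduct_sum, dotProduct_zero] at h
    rw [← h]
    refine Finset.sum_congr rfl fun j _ => ?_
    rw [Matrix.mul_assoc, ← Matrix.mulVec_mulVec, ← Matrix.mulVec_mulVec,
      Matrix.dotProduct_mulVec (star v), Matrix.vecMul_conjTranspose, star_star]
  have hterm : ∀ j ∈ Finset.univ, (0:ℂ) ≤ star (M j *ᵥ v) ⬝ᵥ (A *ᵥ (M j *ᵥ v)) :=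
    fun j _ => hA.dotProduct_mulVec_nonneg _
  have := (Finset.sum_eq_zero_iff_of_nonneg hterm).mp h0 k (Finset.mem_univ k)
  exact (hA.dotProduct_mulVec_zero_iff _).mp this

lemma aux_trace_vecMulVec {d : ℕ} (A : Matrix (Fin d) (Fin d) ℂ) (v w : Fin d → ℂ) :
    (A * Matrix.vecMulVec v w).trace = w ⬝ᵥ (A *ᵥ v) := by
  simp only [Matrix.trace, Matrix.diag, Matrix.mul_apply, Matrix.vecMulVec_apply,
    dotProduct, mulVec]
  refine Finset.sum_congr rfl fun i _ => ?_
  rw [Finset.mul_sum]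
  refine Finset.sum_congr rfl fun j _ => ?_
  ring

/-- If `H_S` (given by the orthogonal projection `P`) is invariant for the CPTP map
`T` and the nondecreasing sequence of supports of `(T*)^n(P)` stabilizes at a proper
subspace of `H`, then `H_S` is not globally asymptotically stable. -/
theorem stmt_18 {d K : ℕ} (M : Fin K → Matrix (Fin d) (Fin d) ℂ)
    (hTP : ∑ k, (M k)ᴴ * M k = 1)
    (T : Matrix (Fin d) (Fin d) ℂ → Matrix (Fin d) (Fin d) ℂ)
    (hT : T = fun A => ∑ k, M k * A * (M k)ᴴ)
    (Tdual : Matrix (Fin d) (Fin d) ℂ → Matrix (Fin d) (Fin d) ℂ)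
    (hTdual : Tdual = fun A => ∑ k, (M k)ᴴ * A * M k)
    (P : Matrix (Fin d) (Fin d) ℂ) (hProj : P * P = P) (hHerm : Pᴴ = P)
    (hinv : ∀ ρ : Matrix (Fin d) (Fin d) ℂ, ρ.PosSemidef →
        msupp ρ ≤ LinearMap.range (Matrix.toEuclideanLin P) →
        msupp (T ρ) ≤ LinearMap.range (Matrix.toEuclideanLin P))
    (hstab : ∃ n : ℕ, msupp (Tdual^[n + 1] P) = msupp (Tdual^[n] P) ∧
        msupp (Tdual^[n] P) ≠ ⊤) :
    ¬ (∀ ρ : Matrix (Fin d) (Fin d) ℂ, ρ.PosSemidef → ρ.trace = 1 →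
        Tendsto (fun m => ((1 - P) * T^[m] ρ).trace) atTop (𝓝 0)) := by
  obtain ⟨n, h1, h2⟩ := hstab
  set Q : ℕ → Matrix (Fin d) (Fin d) ℂ := fun m => Tdual^[m] P with hQ
  -- P is PSD
  have hPpsd : P.PosSemidef := by
    have : P = Pᴴ * P := by rw [hHerm, hProj]
    rw [this]; exact Matrix.posSemidef_conjTranspose_mul_self P
  -- all Q m are PSD
  have hQpsd : ∀ m, (Q m).PosSemidef := by
    intro m
    induction m with
    | zero => exact hPpsd
    | succ m ih =>
      have h : Q (m+1) = Tdual (Q m) := Function.iterate_succ_apply' Tdual m P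
      rw [h, hTdual]
      exact aux_psd_sum M ih
  -- the kernels of Q (n+1) and Q n coincide
  have hkereq : LinearMap.ker (Matrix.toEuclideanLin (Q (n+1)))
      = LinearMap.ker (Matrix.toEuclideanLin (Q n)) := by
    have := congrArg Submodule.orthogonal h1
    simp only [msupp, Submodule.orthogonal_orthogonal] at this; exact this
  -- a nonzero kernel vector
  have hkerne : LinearMap.ker (Matrix.toEuclideanLin (Q n)) ≠ ⊥ := by
    intro hbot
    apply h2
    rw [msupp, hbot, Submodule.bot_orthogonal_eq_top]
  obtain ⟨v0, hv0mem, hv0ne⟩ := Submodule.exists_mem_ne_zero_of_ne_bot hkerne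
  have hv0 : (Q n) *ᵥ (v0 : Fin d → ℂ) = 0 := congrArg WithLp.ofLp (LinearMap.mem_ker.mp hv0mem)
  -- the key invariance : ker Q n is contained in ker Q (n+j)
  have hkerstab : ∀ j : ℕ, ∀ w : Fin d → ℂ, (Q n) *ᵥ w = 0 → (Q (n+j)) *ᵥ w = 0 := by
    intro j
    induction j with
    | zero => intro w hw; exact hw
    | succ j ih =>
      intro w hw
      have hw1 : (Q (n+1)) *ᵥ w = 0 := by
        have hmem : (WithLp.equiv 2 (Fin d → ℂ)).symm w
            ∈ LinearMap.ker (Matrix.toEuclideanLin (Q (n+1))) := by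
          rw [hkereq, LinearMap.mem_ker]; exact congrArg (WithLp.toLp 2) hw
        exact congrArg WithLp.ofLp (LinearMap.mem_ker.mp hmem)
      have hQ1 : Q (n+1) = ∑ k, (M k)ᴴ * (Q n) * M k := by
        have h : Q (n+1) = Tdual (Q n) := Function.iterate_succ_apply' Tdual n P
        rw [h, hTdual]
      rw [hQ1] at hw1
      have hMk : ∀ k, (Q (n+j)) *ᵥ (M k *ᵥ w) = 0 := fun k =>
        ih _ (aux_key M (hQpsd n) w hw1 k)
      have hstep : Q (n+(j+1)) = ∑ k, (M k)ᴴ * (Q (n+j)) * M k := by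
        have h : Q (n+(j+1)) = Tdual (Q (n+j)) := by
          show Tdual^[n+(j+1)] P = _
          rw [show n+(j+1) = (n+j)+1 by ring, Function.iterate_succ_apply' Tdual (n+j) P]
        rw [h, hTdual]
      rw [hstep, aux_sum_mulVec]
      apply Finset.sum_eq_zero
      intro k _
      rw [Matrix.mul_assoc, ← Matrix.mulVec_mulVec, ← Matrix.mulVec_mulVec, hMk k,
        Matrix.mulVec_zero]
  -- build the state ρ
  set c : ℝ := ∑ i, Complex.normSq (v0 i) with hc
  have hcpos : 0 < c := by
    rw [hc]
    apply Finset.sum_pos'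
    · intro i _; exact Complex.normSq_nonneg _
    · by_contra hall
      push_neg at hall
      apply hv0ne
      ext i
      have ha := hall i (Finset.mem_univ i)
      have hb := Complex.normSq_nonneg (v0 i)
      exact Complex.normSq_eq_zero.mp (le_antisymm ha hb)
  have hsne : Real.sqrt c ≠ 0 := by positivity
  set v : Fin d → ℂ := fun i => (((Real.sqrt c)⁻¹ : ℝ) : ℂ) * v0 i with hv
  have hQv : ∀ j, (Q (n+j)) *ᵥ v = 0 := by
    intro j
    apply hkerstab
    have hveq : v = (((Real.sqrt c)⁻¹ : ℝ) : ℂ) • (v0 : Fin d → ℂ) := rfl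
    rw [hveq, Matrix.mulVec_smul, hv0, smul_zero]
  set ρ : Matrix (Fin d) (Fin d) ℂ := Matrix.vecMulVec v (star v) with hρ
  have hρpsd : ρ.PosSemidef := by
    rw [Matrix.posSemidef_iff_dotProduct_mulVec]; constructor
    · ext i j
      simp [hρ, Matrix.vecMulVec_apply, Matrix.conjTranspose_apply, mul_comm]
    · intro x
      have hmv : ρ *ᵥ x = (star v ⬝ᵥ x) • v := by
        ext i
        simp only [hρ, Matrix.vecMulVec_apply, mulVec, dotProduct, Pi.smul_apply,
          smul_eq_mul, Finset.sum_mul, Pi.star_apply, Finset.mul_sum]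
        refine Finset.sum_congr rfl fun j _ => ?_
        ring
      rw [hmv, dotProduct_smul]
      have hconj : star x ⬝ᵥ v = (starRingEnd ℂ) (star v ⬝ᵥ x) := by
        simp only [dotProduct, Pi.star_apply, map_sum, _root_.map_mul, Complex.conj_conj,
          RingHom.coe_coe]
        refine Finset.sum_congr rfl fun i _ => ?_
        simp [mul_comm, Complex.star_def]
      rw [smul_eq_mul, hconj, Complex.mul_conj]
      exact_mod_cast Complex.normSq_nonneg _
  have hρtr : ρ.trace = 1 := by
    have hdiag : ∀ i, ρ i i = ((Complex.normSq (v i) : ℝ) : ℂ) := by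
      intro i
      simp [hρ, Matrix.vecMulVec_apply, mul_comm, Complex.mul_conj, ← Complex.ofReal_pow, Complex.sq_norm]
    have hsum : ∑ i, Complex.normSq (v i) = 1 := by
      have hterm : ∀ i, Complex.normSq (v i)
          = ((Real.sqrt c)⁻¹ * (Real.sqrt c)⁻¹) * Complex.normSq (v0 i) := by
        intro i
        rw [hv]
        simp only [Complex.normSq_mul, Complex.normSq_ofReal]
      rw [Finset.sum_congr rfl fun i _ => hterm i, ← Finset.mul_sum, ← hc]
      rw [← Real.mul_self_sqrt hcpos.le]
      field_simp
      rw [Real.sqrt_sq (Real.sqrt_nonneg c)]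
    calc ρ.trace = ∑ i, ρ i i := rfl
      _ = ∑ i, ((Complex.normSq (v i) : ℝ) : ℂ) := Finset.sum_congr rfl fun i _ => hdiag i
      _ = ((∑ i, Complex.normSq (v i) : ℝ) : ℂ) := by push_cast; rfl
      _ = 1 := by rw [hsum]; norm_num
  -- trace is preserved by T
  intro h
  have htrT : ∀ A : Matrix (Fin d) (Fin d) ℂ, (T A).trace = A.trace := by
    intro A
    rw [hT]
    simp only
    rw [Matrix.trace_sum]
    have : ∀ k : Fin K, (M k * A * (M k)ᴴ).trace = ((M k)ᴴ * M k * A).trace := by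
      intro k
      rw [Matrix.trace_mul_comm, ← Matrix.mul_assoc]
    rw [Finset.sum_congr rfl fun k _ => this k, ← Matrix.trace_sum, ← Finset.sum_mul, hTP,
      one_mul]
  have htrIter : ∀ (m : ℕ) (A : Matrix (Fin d) (Fin d) ℂ), (T^[m] A).trace = A.trace := by
    intro m
    induction m with
    | zero => intro A; rfl
    | succ m ih =>
      intro A
      rw [Function.iterate_succ_apply, ih, htrT]
  have hpair : ∀ A B : Matrix (Fin d) (Fin d) ℂ, (A * T B).trace = (Tdual A * B).trace := by
    intro A B
    rw [hT, hTdual]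
    simp only
    rw [Finset.mul_sum, Finset.sum_mul, Matrix.trace_sum, Matrix.trace_sum]
    refine Finset.sum_congr rfl fun k _ => ?_
    rw [show A * (M k * B * (M k)ᴴ) = (A * (M k * B)) * (M k)ᴴ by noncomm_ring,
      Matrix.trace_mul_comm,
      show (M k)ᴴ * (A * (M k * B)) = ((M k)ᴴ * A * M k) * B by noncomm_ring]
  have htr : ∀ (m : ℕ) (A : Matrix (Fin d) (Fin d) ℂ),
      (P * T^[m] A).trace = (Q m * A).trace := by
    intro m
    induction m with
    | zero => intro A; rfl
    | succ m ih =>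
      intro A
      rw [Function.iterate_succ_apply, ih, hpair,
        show Q (m+1) = Tdual (Q m) from Function.iterate_succ_apply' Tdual m P]
  -- conclude
  have hev : ∀ m ≥ n, ((1 - P) * T^[m] ρ).trace = 1 := by
    intro m hm
    rw [Matrix.sub_mul, Matrix.one_mul, Matrix.trace_sub, htrIter, hρtr, htr]
    obtain ⟨j, rfl⟩ := Nat.exists_eq_add_of_le hm
    rw [hρ, aux_trace_vecMulVec, hQv j, dotProduct_zero, sub_zero]
  have heq : (fun m => ((1 - P) * T^[m] ρ).trace) =ᶠ[atTop] (fun _ => (1:ℂ)) :=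
    Filter.eventually_atTop.2 ⟨n, hev⟩
  have h1' : Tendsto (fun _ : ℕ => (1:ℂ)) atTop (𝓝 0) :=
    (Filter.tendsto_congr' heq).mp (h ρ hρpsd hρtr)
  have : (0:ℂ) = 1 := tendsto_nhds_unique h1' tendsto_const_nhds
  exact zero_ne_one this
end
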